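/- arXiv:0709.0547 — 5 statements merged into one kernel-verified Lean document; each statement's English description precedes it below -/
import Mathlib

section
/- Let k ≥ 1 be an integer and for i = 1, …, s let k₁ⁱ, …, k_{nᵢ}ⁱ be integers with kⱼⁱ ≥ 2. Consider the symmetric star-shaped matrix M indexed by a central vertex σ₀ and the chain vertices σⱼⁱ, where M(σ₀,σ₀) = −k, M(σⱼⁱ,σⱼⁱ) = −kⱼⁱ, M(σ₀,σ₁ⁱ) = M(σ₁ⁱ,σ₀) = 1, M(σⱼⁱ,σ_{j+1}ⁱ) = M(σ_{j+1}ⁱ,σⱼⁱ) = 1, and all other entries zero. Then M is negative definite if and only if ∑_{i=1}^{s} 1/[k₁ⁱ, k₂ⁱ, …, k_{nᵢ}ⁱ] < k. -/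
open Matrix

/-- The continued fraction `[a₁, a₂, …, aₙ] = a₁ − 1/(a₂ − 1/(⋯ − 1/aₙ))`. -/
noncomputable def cfrac : List ℝ → ℝ
  | [] => 0
  | [a] => a
  | a :: b :: rest => a - 1 / cfrac (b :: rest)

lemma cfrac_cons (a : ℝ) (t : List ℝ) : cfrac (a :: t) = a - 1 / cfrac t := by
  cases t <;> simp [cfrac]

lemma one_lt_cfrac (l : List ℝ) (hne : l ≠ []) (h : ∀ a ∈ l, (2:ℝ) ≤ a) : 1 < cfrac l := by
  induction l with
  | nil => simp at hne
  | cons a t ih =>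
    rw [cfrac_cons]
    have ha := h a (by simp)
    rcases eq_or_ne t [] with rfl | hne'
    · simp [cfrac]; linarith
    · have h1 := ih hne' (fun b hb => h b (by simp [hb]))
      have h0 : 0 < cfrac t := by linarith
      have h2 : 1 / cfrac t < 1 := by rw [div_lt_one h0]; linarith
      have h3 : 0 < 1 / cfrac t := by positivity
      linarith

lemma inv_cfrac_nonneg (l : List ℝ) (h : ∀ a ∈ l, (2:ℝ) ≤ a) : 0 ≤ 1 / cfrac l := by
  rcases eq_or_ne l [] with rfl | hne
  · simp [cfrac]
  · have := one_lt_cfrac l hne h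
    positivity

lemma inv_cfrac_lt_one (l : List ℝ) (h : ∀ a ∈ l, (2:ℝ) ≤ a) : 1 / cfrac l < 1 := by
  rcases eq_or_ne l [] with rfl | hne
  · simp [cfrac]
  · have h1 := one_lt_cfrac l hne h
    rw [div_lt_one (by linarith)]; exact h1

/-- The quadratic form of a single chain with diagonal `−l` and coupling `2·p·x₀`. -/
noncomputable def Qf : List ℝ → ℝ → (ℕ → ℝ) → ℝ
  | [], _, _ => 0
  | a :: t, p, x => -a * x 0 ^ 2 + 2 * p * x 0 + Qf t (x 0) fun j => x (j + 1)

lemma Qf_congr (l : List ℝ) (p : ℝ) (x y : ℕ → ℝ) (h : ∀ j < l.length, x j = y j) :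
    Qf l p x = Qf l p y := by
  induction l generalizing p x y with
  | nil => rfl
  | cons a t ih =>
    have h0 : x 0 = y 0 := h 0 (by simp)
    simp only [Qf, h0]
    rw [ih (y 0) _ _ fun j hj => h (j+1) (by simpa using Nat.succ_lt_succ hj)]

lemma Qf_le (l : List ℝ) (h : ∀ a ∈ l, (2:ℝ) ≤ a) (p : ℝ) (x : ℕ → ℝ) :
    Qf l p x ≤ p ^ 2 * (1 / cfrac l) := by
  induction l generalizing p x with
  | nil => simp [Qf, cfrac]
  | cons a t ih =>
    have ht : ∀ a ∈ t, (2:ℝ) ≤ a := fun b hb => h b (by simp [hb])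
    have ha := h a (by simp)
    have hc : 1 < cfrac (a :: t) := one_lt_cfrac _ (by simp) h
    have hrt : 1 / cfrac t = a - cfrac (a :: t) := by rw [cfrac_cons]; ring
    have hQt := ih ht (x 0) (fun j => x (j + 1))
    set c := cfrac (a :: t) with hcdef
    have hcpos : 0 < c := by linarith
    simp only [Qf]
    rw [hrt] at hQt
    have key : -c * x 0 ^ 2 + 2 * p * x 0 ≤ p ^ 2 * (1 / c) := by
      rw [mul_one_div, le_div_iff₀ hcpos]
      nlinarith [sq_nonneg (c * x 0 - p)]
    nlinarith [sq_nonneg (x 0)]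

lemma Qf_neg (l : List ℝ) (h : ∀ a ∈ l, (2:ℝ) ≤ a) :
    ∀ (x : ℕ → ℝ) (j0 : ℕ), j0 < l.length → x j0 ≠ 0 → Qf l 0 x < 0 := by
  induction l with
  | nil => simp
  | cons a t ih =>
    intro x j0 hj0 hx
    have ht : ∀ a ∈ t, (2:ℝ) ≤ a := fun b hb => h b (by simp [hb])
    have ha := h a (by simp)
    simp only [Qf]
    by_cases h0 : x 0 = 0
    · obtain ⟨m, rfl⟩ : ∃ m, j0 = m + 1 := by
        rcases j0 with _ | m
        · exact absurd h0 hx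
        · exact ⟨m, rfl⟩
      have := ih ht (fun j => x (j + 1)) m (by simpa using hj0) hx
      simp only [h0]
      simpa using this
    · have hQt := Qf_le t ht (x 0) (fun j => x (j + 1))
      have h1 := inv_cfrac_lt_one t ht
      have h2 := inv_cfrac_nonneg t ht
      have hx2 : 0 < x 0 ^ 2 := by positivity
      nlinarith

lemma Qf_exists (l : List ℝ) (h : ∀ a ∈ l, (2:ℝ) ≤ a) (p : ℝ) :
    ∃ x : ℕ → ℝ, (∀ j, l.length ≤ j → x j = 0) ∧ Qf l p x = p ^ 2 * (1 / cfrac l) := by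
  induction l generalizing p with
  | nil => exact ⟨fun _ => 0, fun _ _ => rfl, by simp [Qf, cfrac]⟩
  | cons a t ih =>
    have ht : ∀ a ∈ t, (2:ℝ) ≤ a := fun b hb => h b (by simp [hb])
    have ha := h a (by simp)
    have hc : 1 < cfrac (a :: t) := one_lt_cfrac _ (by simp) h
    set c := cfrac (a :: t) with hcdef
    have hcne : c ≠ 0 := by linarith
    obtain ⟨y, hy0, hyQ⟩ := ih ht (p / c)
    refine ⟨fun j => if j = 0 then p / c else y (j - 1), ?_, ?_⟩
    · intro j hj
      simp only [List.length_cons] at hj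
      have : j ≠ 0 := by omega
      simp only [this, if_false]
      exact hy0 _ (by omega)
    · have hsh : (fun j => if j + 1 = 0 then p / c else y (j + 1 - 1)) = y := by
        funext j; simp
      simp only [Qf, hsh, if_pos (Eq.refl (0:ℕ))]
      norm_num
      rw [hyQ]
      have hrt : 1 / cfrac t = a - c := by rw [hcdef, cfrac_cons]; ring
      rw [hrt]
      field_simp
      ring

lemma sum_ite_nbr (n jv : ℕ) (f : ℕ → ℝ) (hf : ∀ m, n ≤ m → f m = 0) :
    ∑ j' ∈ Finset.range n, (if j' = jv then f j' else 0) = f jv := by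
  rw [Finset.sum_ite_eq' (Finset.range n) jv f]
  by_cases hm : jv ∈ Finset.range n
  · rw [if_pos hm]
  · rw [if_neg hm, hf jv (by simpa using hm)]

lemma sum_ite_prev (n jv : ℕ) (f : ℕ → ℝ) (hf : ∀ m, n ≤ m → f m = 0) :
    ∑ j' ∈ Finset.range n, (if j' + 1 = jv then f j' else 0)
      = if jv = 0 then 0 else f (jv - 1) := by
  rcases jv with _ | m
  · simp
  · simp only [Nat.succ_ne_zero, if_false]
    have : ∀ j', (if j' + 1 = m + 1 then f j' else 0) = (if j' = m then f j' else 0) := by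
      intro j'; congr 1; simp [Nat.succ_inj]
    rw [Finset.sum_congr rfl fun j' _ => this j']
    simpa using sum_ite_nbr n m f hf

lemma bridge (n : ℕ) (kv : ℕ → ℝ) (p : ℝ) (x : ℕ → ℝ) (hx : ∀ j, n ≤ j → x j = 0) :
    p * x 0 + ∑ j ∈ Finset.range n,
      x j * (-(kv j) * x j + (if j = 0 then p else x (j - 1)) + x (j + 1))
      = Qf (List.ofFn fun j : Fin n => kv j) p x := by
  induction n generalizing kv p x with
  | zero => simp [Qf, hx 0 le_rfl]
  | succ n ih =>
    rw [Finset.sum_range_succ']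
    have hterm : ∀ j, x (j+1) * (-(kv (j+1)) * x (j+1)
          + (if j + 1 = 0 then p else x (j + 1 - 1)) + x (j + 1 + 1))
        = (fun j => x (j+1)) j * (-((fun j => kv (j+1)) j) * (fun j => x (j+1)) j
          + (if j = 0 then x 0 else (fun j => x (j+1)) (j - 1)) + (fun j => x (j+1)) (j + 1)) := by
      intro j
      rcases j with _ | m <;> simp
    rw [Finset.sum_congr rfl fun j _ => hterm j]
    have := ih (fun j => kv (j+1)) (x 0) (fun j => x (j+1)) (fun j hj => hx (j+1) (by omega))
    rw [List.ofFn_succ]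
    simp only [Qf]
    simp only [Fin.val_succ] at *
    rw [← this]
    norm_num
    ring

/-- Extension of a vector on the star to a `ℕ`-indexed vector on chain `i`. -/
noncomputable def Xv {s : ℕ} {nn : Fin s → ℕ}
    (x : Option (Σ i : Fin s, Fin (nn i)) → ℝ) (i : Fin s) (jv : ℕ) : ℝ :=
  if h : jv < nn i then x (some ⟨i, ⟨jv, h⟩⟩) else 0

/-- Extension of the weights to a `ℕ`-indexed family. -/
noncomputable def kvv {s : ℕ} {nn : Fin s → ℕ}
    (kk : (i : Fin s) → Fin (nn i) → ℤ) (i : Fin s) (jv : ℕ) : ℝ :=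
  if h : jv < nn i then (kk i ⟨jv, h⟩ : ℝ) else 0

lemma star_key (k : ℤ) (s : ℕ)
    (nn : Fin s → ℕ) (kk : (i : Fin s) → Fin (nn i) → ℤ)
    (M : Matrix (Option (Σ i : Fin s, Fin (nn i)))
                (Option (Σ i : Fin s, Fin (nn i))) ℝ)
    (hM00 : M none none = -(k : ℝ))
    (hM0edge : ∀ i (j : Fin (nn i)),
      M none (some ⟨i, j⟩) = (if (j : ℕ) = 0 then 1 else 0) ∧
      M (some ⟨i, j⟩) none = (if (j : ℕ) = 0 then 1 else 0))
    (hMedge : ∀ i (j j' : Fin (nn i)),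
      M (some ⟨i, j⟩) (some ⟨i, j'⟩) =
        if (j : ℕ) + 1 = (j' : ℕ) ∨ (j' : ℕ) + 1 = (j : ℕ) then 1
        else if j = j' then -(kk i j : ℝ) else 0)
    (hMoff : ∀ i i' (j : Fin (nn i)) (j' : Fin (nn i')),
      i ≠ i' → M (some ⟨i, j⟩) (some ⟨i', j'⟩) = 0)
    (x : Option (Σ i : Fin s, Fin (nn i)) → ℝ) :
    x ⬝ᵥ M.mulVec x = -(k : ℝ) * (x none) ^ 2
      + ∑ i : Fin s, Qf (List.ofFn fun j => (kk i j : ℝ)) (x none) (Xv x i) := by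
  classical
  have hXout : ∀ i jv, nn i ≤ jv → Xv x i jv = 0 := fun i jv h => dif_neg (by omega)
  have hXin : ∀ i (j : Fin (nn i)), Xv x i (j : ℕ) = x (some ⟨i, j⟩) := by
    intro i j
    simp [Xv, j.isLt]
  -- row `none`
  have hrow0 : (∑ b, M none b * x b) = -(k:ℝ) * x none + ∑ i, Xv x i 0 := by
    rw [Fintype.sum_option, ← Finset.univ_sigma_univ, Finset.sum_sigma, hM00]
    congr 1
    refine Finset.sum_congr rfl fun i _ => ?_
    have hpt : ∀ j : Fin (nn i), M none (some ⟨i, j⟩) * x (some ⟨i, j⟩)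
        = (if (j : ℕ) = 0 then Xv x i (j:ℕ) else 0) := by
      intro j
      rw [(hM0edge i j).1, hXin]
      split_ifs <;> ring
    rw [Finset.sum_congr rfl fun j _ => hpt j,
      Fin.sum_univ_eq_sum_range (fun jv => if jv = 0 then Xv x i jv else 0) (nn i),
      sum_ite_nbr (nn i) 0 _ (fun m hm => hXout i m hm)]
  -- rows `some ⟨i, j⟩`
  have hrow : ∀ i (j : Fin (nn i)), (∑ b, M (some ⟨i,j⟩) b * x b)
      = (if (j:ℕ) = 0 then x none else 0)
        + (Xv x i ((j:ℕ)+1) + (if (j:ℕ) = 0 then 0 else Xv x i ((j:ℕ)-1))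
          + -(kk i j : ℝ) * Xv x i (j:ℕ)) := by
    intro i j
    rw [Fintype.sum_option, ← Finset.univ_sigma_univ, Finset.sum_sigma]
    congr 1
    · rw [(hM0edge i j).2]; split_ifs <;> ring
    rw [Finset.sum_eq_single_of_mem i (Finset.mem_univ i)
      (fun i' _ hne => Finset.sum_eq_zero fun j' _ => by
        rw [hMoff i i' j j' (Ne.symm hne), zero_mul])]
    have hpt : ∀ j' : Fin (nn i), M (some ⟨i,j⟩) (some ⟨i,j'⟩) * x (some ⟨i,j'⟩)
        = (if (j':ℕ) = (j:ℕ)+1 then Xv x i (j':ℕ) else 0)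
          + ((if (j':ℕ)+1 = (j:ℕ) then Xv x i (j':ℕ) else 0)
          + (if (j':ℕ) = (j:ℕ) then -(kk i j : ℝ) * Xv x i (j:ℕ) else 0)) := by
      intro j'
      rw [hMedge, ← hXin]
      simp only [Fin.ext_iff]
      split_ifs <;>
        first
          | ring1
          | (exfalso; omega)
          | (rw [show ((j':ℕ)) = ((j:ℕ)) from by omega]; ring1)
    rw [Finset.sum_congr rfl fun j' _ => hpt j', Finset.sum_add_distrib,
      Fin.sum_univ_eq_sum_range
        (fun jv => (if jv = (j:ℕ)+1 then Xv x i jv else 0)) (nn i),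
      Fin.sum_univ_eq_sum_range
        (fun jv => (if jv + 1 = (j:ℕ) then Xv x i jv else 0)
          + (if jv = (j:ℕ) then -(kk i j : ℝ) * Xv x i (j:ℕ) else 0)) (nn i),
      Finset.sum_add_distrib,
      sum_ite_nbr (nn i) ((j:ℕ)+1) _ (fun m hm => hXout i m hm),
      sum_ite_prev (nn i) (j:ℕ) _ (fun m hm => hXout i m hm),
      Finset.sum_ite_eq' (Finset.range (nn i)) ((j:ℕ))
        (fun _ => -(kk i j : ℝ) * Xv x i (j:ℕ)),
      if_pos (Finset.mem_range.mpr j.isLt)]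
    ring
  -- the chain sums
  have hchain : ∀ i, (∑ j : Fin (nn i), x (some ⟨i,j⟩) * (∑ b, M (some ⟨i,j⟩) b * x b))
      = Qf (List.ofFn fun j => (kk i j : ℝ)) (x none) (Xv x i) - x none * Xv x i 0 := by
    intro i
    have hb := bridge (nn i) (kvv kk i) (x none) (Xv x i) (fun jv hj => hXout i jv hj)
    have hpt : ∀ j : Fin (nn i), x (some ⟨i,j⟩) * (∑ b, M (some ⟨i,j⟩) b * x b)
        = (fun jv => Xv x i jv * (-(kvv kk i jv) * Xv x i jv
            + (if jv = 0 then x none else Xv x i (jv-1)) + Xv x i (jv+1))) (j : ℕ) := by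
      intro j
      rw [hrow i j, ← hXin]
      have hk : kvv kk i (j:ℕ) = (kk i j : ℝ) := by simp [kvv, j.isLt]
      simp only [hk]
      split_ifs <;> ring
    rw [Finset.sum_congr rfl fun j _ => hpt j,
      Fin.sum_univ_eq_sum_range (fun jv => Xv x i jv * (-(kvv kk i jv) * Xv x i jv
        + (if jv = 0 then x none else Xv x i (jv-1)) + Xv x i (jv+1))) (nn i)]
    have hLL : (List.ofFn fun j => (kk i j : ℝ)) = List.ofFn fun j : Fin (nn i) => kvv kk i (j:ℕ) := by
      refine congrArg _ ?_
      funext j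
      simp [kvv, j.isLt]
    rw [hLL, ← hb]
    ring
  -- assemble
  have expand : x ⬝ᵥ M.mulVec x = ∑ a, x a * ∑ b, M a b * x b := rfl
  rw [expand, Fintype.sum_option, ← Finset.univ_sigma_univ, Finset.sum_sigma, hrow0]
  rw [Finset.sum_congr rfl fun i (_ : i ∈ Finset.univ) => hchain i]
  rw [Finset.sum_sub_distrib, ← Finset.mul_sum]
  ring

/-- The star-shaped intersection matrix, with central vertex `σ₀` of weight `−k`
and, for each `i`, a linear chain of vertices `σ₁ⁱ,…,σ_{nᵢ}ⁱ` of weights `−kⱼⁱ`,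
is negative definite iff `∑ᵢ 1/[k₁ⁱ,…,k_{nᵢ}ⁱ] < k`. -/
theorem star_matrix_negDef_iff (k : ℤ) (hk : 1 ≤ k) (s : ℕ)
    (nn : Fin s → ℕ) (kk : (i : Fin s) → Fin (nn i) → ℤ)
    (hkk : ∀ i j, 2 ≤ kk i j)
    (M : Matrix (Option (Σ i : Fin s, Fin (nn i)))
                (Option (Σ i : Fin s, Fin (nn i))) ℝ)
    (hM00 : M none none = -(k : ℝ))
    (hMdiag : ∀ i (j : Fin (nn i)), M (some ⟨i, j⟩) (some ⟨i, j⟩) = -(kk i j : ℝ))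
    (hM0edge : ∀ i (j : Fin (nn i)),
      M none (some ⟨i, j⟩) = (if (j : ℕ) = 0 then 1 else 0) ∧
      M (some ⟨i, j⟩) none = (if (j : ℕ) = 0 then 1 else 0))
    (hMedge : ∀ i (j j' : Fin (nn i)),
      M (some ⟨i, j⟩) (some ⟨i, j'⟩) =
        if (j : ℕ) + 1 = (j' : ℕ) ∨ (j' : ℕ) + 1 = (j : ℕ) then 1
        else if j = j' then -(kk i j : ℝ) else 0)
    (hMoff : ∀ i i' (j : Fin (nn i)) (j' : Fin (nn i')),
      i ≠ i' → M (some ⟨i, j⟩) (some ⟨i', j'⟩) = 0) :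
    (∀ x : Option (Σ i : Fin s, Fin (nn i)) → ℝ, x ≠ 0 →
        x ⬝ᵥ M.mulVec x < 0) ↔
    (∑ i : Fin s, 1 / cfrac (List.ofFn fun j => (kk i j : ℝ))) < (k : ℝ) := by
  classical
  have key := star_key k s nn kk M hM00 hM0edge hMedge hMoff
  have hLmem : ∀ i, ∀ a ∈ (List.ofFn fun j => (kk i j : ℝ)), (2:ℝ) ≤ a := by
    intro i a ha
    rw [List.mem_ofFn] at ha
    obtain ⟨j, rfl⟩ := ha
    show (2:ℝ) ≤ ((kk i j : ℤ) : ℝ)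
    exact_mod_cast hkk i j
  constructor
  · intro hneg
    by_contra hge
    push_neg at hge
    choose y hy0 hyQ using fun i => Qf_exists (List.ofFn fun j => (kk i j : ℝ)) (hLmem i) 1
    set xx : Option (Σ i : Fin s, Fin (nn i)) → ℝ :=
      fun a => match a with
        | none => 1
        | some p => y p.1 (p.2 : ℕ) with hxxdef
    have hxx : xx ≠ 0 := by
      intro h
      have := congrFun h none
      simp [hxxdef] at this
    have hlt := hneg xx hxx
    rw [key xx] at hlt
    have hXy : ∀ i, Qf (List.ofFn fun j => (kk i j : ℝ)) (xx none) (Xv xx i)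
        = 1 ^ 2 * (1 / cfrac (List.ofFn fun j => (kk i j : ℝ))) := by
      intro i
      have hnone : xx none = 1 := rfl
      rw [hnone, ← hyQ i]
      apply Qf_congr
      intro jv hjv
      rw [List.length_ofFn] at hjv
      simp only [Xv, dif_pos hjv]; rfl
    rw [Finset.sum_congr rfl fun i _ => hXy i] at hlt
    have hnone : xx none = 1 := rfl
    rw [hnone] at hlt
    simp only [one_pow, one_mul] at hlt
    linarith
  · intro hlt x hx
    rw [key x]
    rcases eq_or_ne (x none) 0 with h0 | h0
    · have hex : ∃ i : Fin s, ∃ j : Fin (nn i), x (some ⟨i, j⟩) ≠ 0 := by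
        by_contra hall
        push_neg at hall
        apply hx
        funext a
        show x a = 0
        rcases a with _ | ⟨i, j⟩
        · exact h0
        · exact hall i j
      obtain ⟨i0, j0, hj0⟩ := hex
      rw [h0]
      have hle : ∀ i ∈ Finset.univ, Qf (List.ofFn fun j => (kk i j : ℝ)) 0 (Xv x i)
          ≤ (0 : Fin s → ℝ) i := by
        intro i _
        have := Qf_le (List.ofFn fun j => (kk i j : ℝ)) (hLmem i) 0 (Xv x i)
        simpa using this
      have hlt0 : Qf (List.ofFn fun j => (kk i0 j : ℝ)) 0 (Xv x i0) < (0 : Fin s → ℝ) i0 := by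
        refine Qf_neg _ (hLmem i0) (Xv x i0) (j0 : ℕ) (by simp [j0.isLt]) ?_
        show Xv x i0 (j0 : ℕ) ≠ 0
        simpa [Xv, j0.isLt] using hj0
      have hsum := Finset.sum_lt_sum hle ⟨i0, Finset.mem_univ i0, hlt0⟩
      simp only [Finset.sum_const_zero, Pi.zero_apply] at hsum
      simpa using hsum
    · have hsum : ∑ i, Qf (List.ofFn fun j => (kk i j : ℝ)) (x none) (Xv x i)
          ≤ ∑ i, (x none) ^ 2 * (1 / cfrac (List.ofFn fun j => (kk i j : ℝ))) :=
        Finset.sum_le_sum fun i _ => Qf_le _ (hLmem i) _ _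
      rw [← Finset.mul_sum] at hsum
      have hx2 : 0 < (x none) ^ 2 := by positivity
      nlinarith [mul_pos hx2 (sub_pos.mpr hlt)]
end

section
/- Let p : 𝔻 → ℂ be a holomorphic function on the open unit disk, not identically zero, satisfying p(t₁ t₂) = p(t₁) p(t₂) for all t₁, t₂ in the punctured disk with t₁ t₂ in the disk. Then there exists a natural number q such that p(t) = t^q for all t in the disk. -/
open Metric

/-- A holomorphic function on the unit disk, not identically zero, which is
multiplicative on the punctured disk, is `t ↦ t^q` for some natural `q`. -/
theorem multiplicative_holomorphic_is_power (p : ℂ → ℂ)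
    (hol : DifferentiableOn ℂ p (ball (0 : ℂ) 1))
    (hne : ¬ ∀ t ∈ ball (0 : ℂ) 1, p t = 0)
    (hmul : ∀ t₁ t₂ : ℂ, t₁ ∈ ball (0 : ℂ) 1 → t₁ ≠ 0 →
      t₂ ∈ ball (0 : ℂ) 1 → t₂ ≠ 0 → t₁ * t₂ ∈ ball (0 : ℂ) 1 →
      p (t₁ * t₂) = p t₁ * p t₂) :
    ∃ q : ℕ, ∀ t ∈ ball (0 : ℂ) 1, p t = t ^ q := by
  have hU : IsOpen (ball (0 : ℂ) 1) := isOpen_ball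
  have hpa : AnalyticOnNhd ℂ p (ball 0 1) := hol.analyticOnNhd hU
  have hpre : IsPreconnected (ball (0 : ℂ) 1) := (convex_ball (0 : ℂ) 1).isPreconnected
  have h0 : (0 : ℂ) ∈ ball (0 : ℂ) 1 := by simp
  have hp0 : AnalyticAt ℂ p 0 := hpa 0 h0
  have hnt : analyticOrderAt p 0 ≠ ⊤ := by
    intro h
    rw [analyticOrderAt_eq_top] at h
    exact hne fun t ht =>
      hpa.eqOn_of_preconnected_of_eventuallyEq analyticOnNhd_const hpre h0 h ht
  obtain ⟨q, hq⟩ : ∃ q : ℕ, analyticOrderAt p 0 = q := ⟨(analyticOrderAt p 0).toNat, (ENat.coe_toNat hnt).symm⟩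
  obtain ⟨g, hg, hg0, hfg⟩ := (hp0.analyticOrderAt_eq_natCast).mp hq
  simp only [sub_zero, smul_eq_mul] at hfg
  obtain ⟨ε₀, hε₀, hballε₀⟩ := Metric.eventually_nhds_iff_ball.mp hfg
  set ε : ℝ := min ε₀ 1 with hεdef
  have hε : 0 < ε := lt_min hε₀ one_pos
  have hε1 : ε ≤ 1 := min_le_right _ _
  have hεε₀ : ε ≤ ε₀ := min_le_left _ _
  have hfac : ∀ z : ℂ, z ∈ ball (0 : ℂ) ε → p z = z ^ q * g z := fun z hz =>
    hballε₀ z (ball_subset_ball hεε₀ hz)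
  -- key step: g t = 1 for t ≠ 0 in the small ball
  have hkey : ∀ t : ℂ, t ∈ ball (0 : ℂ) ε → t ≠ 0 → g t = 1 := by
    intro t ht htne
    have htabs : ‖t‖ < ε := by simpa [Complex.dist_eq] using ht
    have ht1 : t ∈ ball (0 : ℂ) 1 := by
      simp [Complex.dist_eq]
      exact htabs.trans_le hε1
    -- tendsto facts along the punctured neighborhood of 0
    have Tmul : Filter.Tendsto (fun s : ℂ => t * s) (nhdsWithin 0 {(0:ℂ)}ᶜ) (nhds 0) := by
      have : Filter.Tendsto (fun s : ℂ => t * s) (nhds 0) (nhds (t * 0)) :=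
        (continuous_const.mul continuous_id).tendsto 0
      simpa using this.mono_left nhdsWithin_le_nhds
    have T1 : Filter.Tendsto (fun s : ℂ => g (t * s)) (nhdsWithin 0 {(0:ℂ)}ᶜ) (nhds (g 0)) :=
      hg.continuousAt.tendsto.comp Tmul
    have T2 : Filter.Tendsto (fun s : ℂ => g t * g s) (nhdsWithin 0 {(0:ℂ)}ᶜ)
        (nhds (g t * g 0)) :=
      Filter.Tendsto.const_mul _ (hg.continuousAt.tendsto.mono_left nhdsWithin_le_nhds)
    have hev : ∀ᶠ s in nhdsWithin 0 {(0:ℂ)}ᶜ, g (t * s) = g t * g s := by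
      have hb : ∀ᶠ s : ℂ in nhds 0, s ∈ ball (0 : ℂ) ε := ball_mem_nhds _ hε
      filter_upwards [self_mem_nhdsWithin, hb.filter_mono nhdsWithin_le_nhds] with s hs hsball
      have hsne : s ≠ 0 := hs
      have hsabs : ‖s‖ < ε := by simpa [Complex.dist_eq] using hsball
      have hs1 : s ∈ ball (0 : ℂ) 1 := by
        simp [Complex.dist_eq]; exact hsabs.trans_le hε1
      have htsball : t * s ∈ ball (0 : ℂ) ε := by
        simp only [mem_ball, Complex.dist_eq, sub_zero, norm_mul]
        calc ‖t‖ * ‖s‖ ≤ ‖t‖ * 1 := by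
              exact mul_le_mul_of_nonneg_left (le_of_lt (hsabs.trans_le hε1))
                (norm_nonneg _)
          _ = ‖t‖ := mul_one _
          _ < ε := htabs
      have hts1 : t * s ∈ ball (0 : ℂ) 1 := ball_subset_ball hε1 htsball
      have hmul' := hmul t s ht1 htne hs1 hsne hts1
      rw [hfac _ htsball, hfac s hsball, hfac t ht] at hmul'
      have hne' : (t * s) ^ q ≠ 0 := pow_ne_zero _ (mul_ne_zero htne hsne)
      apply mul_left_cancel₀ hne'
      rw [hmul']; ring
    have := tendsto_nhds_unique (T1.congr' hev) T2
    -- g 0 = g t * g 0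
    have h1 : g t * g 0 = 1 * g 0 := by rw [← this, one_mul]
    exact mul_right_cancel₀ hg0 h1
  -- g 0 = 1 as well, by continuity
  have hg01 : g 0 = 1 := by
    have T : Filter.Tendsto g (nhdsWithin 0 {(0:ℂ)}ᶜ) (nhds (g 0)) :=
      hg.continuousAt.tendsto.mono_left nhdsWithin_le_nhds
    have hev : ∀ᶠ s in nhdsWithin 0 {(0:ℂ)}ᶜ, g s = 1 := by
      have hb : ∀ᶠ s : ℂ in nhds 0, s ∈ ball (0 : ℂ) ε := ball_mem_nhds _ hε
      filter_upwards [self_mem_nhdsWithin, hb.filter_mono nhdsWithin_le_nhds] with s hs hsb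
      exact hkey s hsb hs
    exact tendsto_nhds_unique (T.congr' hev) tendsto_const_nhds
  -- hence p z = z ^ q near 0
  have hev0 : p =ᶠ[nhds (0 : ℂ)] fun z => z ^ q := by
    have hb : ∀ᶠ s : ℂ in nhds 0, s ∈ ball (0 : ℂ) ε := ball_mem_nhds _ hε
    filter_upwards [hb] with z hz
    rcases eq_or_ne z 0 with rfl | hzne
    · rw [hfac 0 hz, hg01, mul_one]
    · rw [hfac z hz, hkey z hz hzne, mul_one]
  refine ⟨q, fun t ht => ?_⟩
  have hqa : AnalyticOnNhd ℂ (fun z : ℂ => z ^ q) (ball 0 1) :=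
    fun z _ => (analyticAt_id).pow q
  exact hpa.eqOn_of_preconnected_of_eventuallyEq hqa hpre h0 hev0 ht
end

section
/- Let U ⊆ ℂ be a connected open set and p : 𝔻 × U → ℂ a holomorphic function such that for each x ∈ U the function t ↦ p(t,x) is not identically zero and satisfies p(t₁t₂, x) = p(t₁,x) p(t₂,x) for all t₁, t₂ in the punctured disk with t₁t₂ ∈ 𝔻. Then there exists a single natural number q, independent of x, such that p(t,x) = t^q for all (t,x) ∈ 𝔻 × U. -/
open Metric Filter Topology

lemma gap_lemma {q q₀ : ℕ} (h : q ≠ q₀) :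
    (1/2:ℝ)^(q₀+1) ≤ ‖(1/2:ℂ)^q - (1/2:ℂ)^q₀‖ := by
  have he : ((1/2:ℂ)^q - (1/2:ℂ)^q₀) = (((1/2:ℝ)^q - (1/2:ℝ)^q₀ : ℝ) : ℂ) := by
    push_cast; ring
  rw [he, Complex.norm_real, Real.norm_eq_abs]
  have hpos : ∀ n : ℕ, (0:ℝ) < (1/2:ℝ)^n := fun n => by positivity
  have hanti : ∀ m n : ℕ, m ≤ n → (1/2:ℝ)^n ≤ (1/2:ℝ)^m := fun m n hmn =>
    pow_le_pow_of_le_one (by norm_num) (by norm_num) hmn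
  rcases lt_or_gt_of_ne h with hlt | hgt
  · -- q < q₀
    have h1 : (1/2:ℝ)^q₀ ≤ (1/2:ℝ)^(q+1) := hanti _ _ hlt
    have h2 : (1/2:ℝ)^(q₀+1) ≤ (1/2:ℝ)^(q+1) :=
      hanti _ _ (by omega)
    rw [le_abs]
    left
    nlinarith [pow_succ (1/2:ℝ) q, hpos q]
  · -- q₀ < q
    have h1 : (1/2:ℝ)^q ≤ (1/2:ℝ)^(q₀+1) := hanti _ _ hgt
    rw [le_abs]
    right
    nlinarith [pow_succ (1/2:ℝ) q₀, hpos q₀]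

lemma lemA (f : ℂ → ℂ) (hf : DifferentiableOn ℂ f (ball (0:ℂ) 1))
    (hne : ¬ ∀ t ∈ ball (0:ℂ) 1, f t = 0)
    (hmul : ∀ t₁ t₂ : ℂ, t₁ ∈ ball (0:ℂ) 1 → t₁ ≠ 0 → t₂ ∈ ball (0:ℂ) 1 → t₂ ≠ 0 →
      t₁ * t₂ ∈ ball (0:ℂ) 1 → f (t₁ * t₂) = f t₁ * f t₂) :
    ∃ q : ℕ, ∀ t ∈ ball (0:ℂ) 1, f t = t ^ q := by
  have hball : (0:ℂ) ∈ ball (0:ℂ) 1 := by simp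
  have hpre : IsPreconnected (ball (0:ℂ) 1) := (convex_ball (0:ℂ) 1).isPreconnected
  have hA : AnalyticOnNhd ℂ f (ball (0:ℂ) 1) := hf.analyticOnNhd isOpen_ball
  have hA0 : AnalyticAt ℂ f 0 := hA 0 hball
  have h0 : ¬ ∀ᶠ z in 𝓝 (0:ℂ), f z = 0 := by
    intro hev
    exact hne fun t ht => hA.eqOn_zero_of_preconnected_of_eventuallyEq_zero hpre hball hev ht
  have hord : analyticOrderAt f 0 ≠ ⊤ := fun h => h0 (analyticOrderAt_eq_top.mp h)
  obtain ⟨q, hq⟩ : ∃ q : ℕ, analyticOrderAt f 0 = q := by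
    lift analyticOrderAt f 0 to ℕ using hord with n hn
    exact ⟨n, rfl⟩
  obtain ⟨g, hg, hg0, hev⟩ := hA0.analyticOrderAt_eq_natCast.mp hq
  simp only [sub_zero, smul_eq_mul] at hev
  -- eventually in the punctured nbhd, f t = t ^ q
  have hgc : ContinuousAt g 0 := hg.continuousAt
  have key : ∀ᶠ t₂ in 𝓝[≠] (0:ℂ), f t₂ = t₂ ^ q := by
    have hevb : ∀ᶠ z in 𝓝 (0:ℂ), f z = z ^ q * g z ∧ z ∈ ball (0:ℂ) 1 :=
      hev.and (isOpen_ball.eventually_mem hball)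
    filter_upwards [eventually_nhdsWithin_of_eventually_nhds hevb,
      self_mem_nhdsWithin] with t₂ ht₂ ht₂ne
    obtain ⟨ht₂eq, ht₂b⟩ := ht₂
    have ht₂ne : t₂ ≠ 0 := ht₂ne
    -- show g t₂ = 1
    have hlim : Tendsto (fun t₁ : ℂ => g (t₁ * t₂)) (𝓝[≠] 0) (𝓝 (g 0)) := by
      apply hgc.tendsto.comp
      have : Tendsto (fun t₁ : ℂ => t₁ * t₂) (𝓝 0) (𝓝 0) := by
        simpa using (tendsto_id : Tendsto id (𝓝 (0:ℂ)) (𝓝 0)).mul_const t₂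
      exact this.mono_left nhdsWithin_le_nhds
    have hlim2 : Tendsto (fun t₁ : ℂ => g t₁ * g t₂) (𝓝[≠] 0) (𝓝 (g 0 * g t₂)) :=
      ((hgc.tendsto.mono_left nhdsWithin_le_nhds).mul tendsto_const_nhds)
    have heq : ∀ᶠ t₁ in 𝓝[≠] (0:ℂ), g (t₁ * t₂) = g t₁ * g t₂ := by
      have hmemb : ∀ᶠ t₁ in 𝓝 (0:ℂ), t₁ ∈ ball (0:ℂ) 1 := isOpen_ball.eventually_mem hball
      have hprod : Tendsto (fun t₁ : ℂ => t₁ * t₂) (𝓝 0) (𝓝 0) := by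
        simpa using (tendsto_id : Tendsto id (𝓝 (0:ℂ)) (𝓝 0)).mul_const t₂
      filter_upwards [eventually_nhdsWithin_of_eventually_nhds hevb,
        eventually_nhdsWithin_of_eventually_nhds (hprod.eventually hevb),
        self_mem_nhdsWithin] with t₁ h₁ h₁₂ h₁ne
      have h₁ne : t₁ ≠ 0 := h₁ne
      have hm := hmul t₁ t₂ h₁.2 h₁ne ht₂b ht₂ne h₁₂.2
      rw [h₁₂.1, h₁.1, ht₂eq] at hm
      have hne12 : (t₁ * t₂) ^ q ≠ 0 := pow_ne_zero _ (mul_ne_zero h₁ne ht₂ne)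
      exact mul_left_cancel₀ hne12 (by linear_combination hm)
    have huniq : g 0 = g 0 * g t₂ :=
      tendsto_nhds_unique (hlim.congr' heq) hlim2
    have hg1 : g t₂ = 1 :=
      (mul_left_cancel₀ hg0 (by rw [mul_one, ← huniq])).symm
    rw [ht₂eq, hg1, mul_one]
  -- identity theorem
  refine ⟨q, fun t ht => ?_⟩
  have hAq : AnalyticOnNhd ℂ (fun z : ℂ => z ^ q) (ball (0:ℂ) 1) :=
    fun z _ => (analyticAt_id.pow q)
  exact hA.eqOn_of_preconnected_of_frequently_eq hAq hpre hball key.frequently ht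

lemma half_mem_ball : (1/2 : ℂ) ∈ ball (0:ℂ) 1 := by
  rw [mem_ball_zero_iff]
  have : ‖(1/2:ℂ)‖ = 1/2 := by
    rw [show (1/2:ℂ) = ((1/2:ℝ):ℂ) by norm_num, Complex.norm_real, Real.norm_eq_abs]
    norm_num
  rw [this]; norm_num


/-- A holomorphic function `p(t,x)` on `𝔻 × U`, `U ⊆ ℂ` open and connected,
with `t ↦ p(t,x)` multiplicative and not identically zero for each `x ∈ U`,
equals `t^q` for a single natural number `q` independent of `x`. -/
theorem multiplicative_holomorphic_family_is_power (U : Set ℂ)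
    (hU : IsOpen U) (hUc : IsConnected U) (p : ℂ × ℂ → ℂ)
    (hol : DifferentiableOn ℂ p (ball (0 : ℂ) 1 ×ˢ U))
    (hne : ∀ x ∈ U, ¬ ∀ t ∈ ball (0 : ℂ) 1, p (t, x) = 0)
    (hmul : ∀ x ∈ U, ∀ t₁ t₂ : ℂ, t₁ ∈ ball (0 : ℂ) 1 → t₁ ≠ 0 →
      t₂ ∈ ball (0 : ℂ) 1 → t₂ ≠ 0 → t₁ * t₂ ∈ ball (0 : ℂ) 1 →
      p (t₁ * t₂, x) = p (t₁, x) * p (t₂, x)) :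
    ∃ q : ℕ, ∀ t ∈ ball (0 : ℂ) 1, ∀ x ∈ U, p (t, x) = t ^ q := by
  have key : ∀ x ∈ U, ∃ q : ℕ, ∀ t ∈ ball (0:ℂ) 1, p (t, x) = t ^ q := by
    intro x hx
    apply lemA (fun t => p (t, x))
    · exact hol.comp ((differentiable_id.prodMk (differentiable_const x)).differentiableOn)
        (fun t ht => Set.mk_mem_prod ht hx)
    · exact hne x hx
    · exact hmul x hx
  choose! Q hQ using key
  obtain ⟨x₀, hx₀⟩ := hUc.nonempty
  refine ⟨Q x₀, fun t ht x hx => ?_⟩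
  -- continuity of x ↦ p (1/2, x) on U
  have hcont : ContinuousOn (fun x : ℂ => p (1/2, x)) U := by
    apply hol.continuousOn.comp (Continuous.continuousOn (by continuity))
    exact fun x hx => Set.mk_mem_prod half_mem_ball hx
  set c : ℂ := (1/2:ℂ) ^ Q x₀ with hc
  -- the set where p(1/2,·) = c
  set S : Set ℂ := {x | x ∈ U ∧ p (1/2, x) = c} with hS
  set T : Set ℂ := {x | x ∈ U ∧ p (1/2, x) ≠ c} with hT
  have hQeq : ∀ y ∈ U, p (1/2, y) = (1/2:ℂ) ^ Q y := fun y hy => hQ y hy _ half_mem_ball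
  have hQc : ∀ y ∈ U, p (1/2, y) = c → Q y = Q x₀ := by
    intro y hy hpc
    by_contra hne'
    have := gap_lemma hne'
    rw [← hQeq y hy, ← hc, hpc, sub_self, norm_zero] at this
    have : (0:ℝ) < (1/2:ℝ)^(Q x₀ + 1) := by positivity
    linarith
  have hSopen : IsOpen S := by
    rw [Metric.isOpen_iff]
    rintro y ⟨hyU, hyc⟩
    have hcy : ContinuousAt (fun x : ℂ => p (1/2, x)) y :=
      hcont.continuousAt (hU.mem_nhds hyU)
    have hev : ∀ᶠ x in 𝓝 y, ‖p (1/2, x) - c‖ < (1/2:ℝ)^(Q x₀ + 1) := by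
      have : Tendsto (fun x : ℂ => ‖p (1/2, x) - c‖) (𝓝 y) (𝓝 ‖p (1/2, y) - c‖) :=
        (hcy.sub continuousAt_const).norm
      rw [hyc, sub_self, norm_zero] at this
      exact this.eventually_lt_const (by positivity)
    obtain ⟨ε, hε, hball⟩ := Metric.eventually_nhds_iff.mp (hev.and (hU.eventually_mem hyU))
    refine ⟨ε, hε, fun z hz => ?_⟩
    obtain ⟨hznorm, hzU⟩ := hball hz
    refine ⟨hzU, ?_⟩
    rw [hQeq z hzU]
    rw [hQeq z hzU] at hznorm
    by_contra hzc
    have hzne : Q z ≠ Q x₀ := by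
      intro h; rw [h] at hzc; exact hzc rfl
    exact absurd hznorm (not_lt.mpr (gap_lemma hzne))
  have hTopen : IsOpen T := by
    have : T = U ∩ (fun x : ℂ => p (1/2, x)) ⁻¹' ({c}ᶜ) := by
      ext z; simp [hT, Set.mem_setOf_eq]
    rw [this]
    exact hcont.isOpen_inter_preimage hU isOpen_compl_singleton
  -- preconnectedness forces T ∩ U = ∅
  have hUS : ∀ y ∈ U, p (1/2, y) = c := by
    intro y hy
    by_contra hyc
    have hsub : U ⊆ S ∪ T := by
      intro z hz
      by_cases h : p (1/2, z) = c
      · exact Or.inl ⟨hz, h⟩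
      · exact Or.inr ⟨hz, h⟩
    obtain ⟨z, hz⟩ := hUc.isPreconnected S T hSopen hTopen hsub
      ⟨x₀, hx₀, ⟨hx₀, hQeq x₀ hx₀⟩⟩ ⟨y, hy, ⟨hy, hyc⟩⟩
    exact hz.2.2.2 hz.2.1.2
  have : Q x = Q x₀ := hQc x hx (hUS x hx)
  rw [← this]
  exact hQ x hx t ht
end

section
/- Let k₁, …, kₙ be integers with kⱼ ≥ 2 and let α = [kₙ, kₙ₋₁, …, k₁] be the associated Hirzebruch–Jung continued fraction. Then there exist an integer m ≥ 1 and integers l₁, …, l_m with lⱼ ≥ 2 such that 1/α + 1/[l_m, l_{m−1}, …, l₁] = 1. -/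
/-- The continued fraction `[a₁, …, aₘ] = a₁ − 1/(a₂ − 1/(⋯ − 1/aₘ))`. -/
def cfracQ : List ℚ → ℚ
  | [] => 0
  | [a] => a
  | a :: b :: rest => a - 1 / cfracQ (b :: rest)

lemma cfracQ_cons (a : ℚ) {T : List ℚ} (hT : T ≠ []) :
    cfracQ (a :: T) = a - 1 / cfracQ T := by
  cases T with
  | nil => simp at hT
  | cons b rest => rfl

lemma cfracQ_gt_one : ∀ (L : List ℚ), L ≠ [] → (∀ x ∈ L, (2:ℚ) ≤ x) → 1 < cfracQ L := by
  intro L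
  induction L with
  | nil => simp
  | cons a T ih =>
    intro _ h
    have ha : (2:ℚ) ≤ a := h a (by simp)
    cases T with
    | nil => simpa [cfracQ] using lt_of_lt_of_le one_lt_two ha
    | cons b rest =>
      have hT : 1 < cfracQ (b :: rest) := ih (by simp) (fun x hx => h x (by simp [hx]))
      rw [cfracQ_cons a (by simp)]
      have h1 : 1 / cfracQ (b :: rest) < 1 := by
        rw [div_lt_one (by linarith)]; linarith
      have h0 : 0 < 1 / cfracQ (b :: rest) := by positivity
      linarith

lemma cfracQ_head_add_one (a : ℚ) (T : List ℚ) :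
    cfracQ ((a + 1) :: T) = cfracQ (a :: T) + 1 := by
  cases T with
  | nil => simp [cfracQ]
  | cons b rest => simp [cfracQ]; ring

lemma cfracQ_replicate (m : ℕ) :
    cfracQ (List.replicate (m + 1) 2) = ((m : ℚ) + 2) / (m + 1) := by
  induction m with
  | zero => simp [cfracQ]
  | succ m ih =>
    have : List.replicate (m + 2) (2:ℚ) = 2 :: List.replicate (m + 1) 2 := rfl
    rw [this, cfracQ_cons 2 (by simp), ih]
    have hm : ((m:ℚ) + 1) > 0 := by positivity
    field_simp
    push_cast
    ring

lemma cfracQ_replicate_append (j : ℕ) (L : List ℚ) (hne : L ≠ []) (hL : 1 < cfracQ L) :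
    cfracQ (List.replicate j 2 ++ L)
      = ((j + 1) * cfracQ L - j) / (j * cfracQ L - j + 1) := by
  induction j with
  | zero => simp
  | succ j ih =>
    set y := cfracQ L with hy
    have hden : (j:ℚ) * y - j + 1 > 0 := by nlinarith
    have hnum : ((j:ℚ) + 1) * y - j > 0 := by nlinarith
    have hden' : ((j:ℚ)+1) * y - (j+1) + 1 > 0 := by nlinarith
    have : List.replicate (j+1) (2:ℚ) ++ L = 2 :: (List.replicate j 2 ++ L) := rfl
    rw [this, cfracQ_cons 2 (by simp [hne]), ih, one_div_div]
    push_cast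
    have h1 : ((j:ℚ)+1) * y - j ≠ 0 := by linarith
    have h2 : ((j:ℚ)+1) * y - ((j:ℚ)+1) + 1 ≠ 0 := by linarith
    have h3 : -(j:ℚ) + j * y + y ≠ 0 := by linarith
    have h4 : y * ((j:ℚ) + 1) - j ≠ 0 := by linarith
    have h5 : (y - 1) * ((j:ℚ) + 1) + 1 ≠ 0 := by linarith
    field_simp
    ring

lemma key : ∀ (L : List ℤ), L ≠ [] → (∀ x ∈ L, (2:ℤ) ≤ x) →
    ∃ M : List ℤ, M ≠ [] ∧ (∀ x ∈ M, (2:ℤ) ≤ x) ∧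
      1 / cfracQ (L.map (fun x : ℤ => (x:ℚ))) + 1 / cfracQ (M.map (fun x : ℤ => (x:ℚ))) = 1 := by
  intro L
  induction L with
  | nil => simp
  | cons c rest ih =>
    intro _ h
    have hc : (2:ℤ) ≤ c := h c (by simp)
    cases rest with
    | nil =>
      refine ⟨List.replicate (c-1).toNat 2, ?_, ?_, ?_⟩
      · have hh : (c-1).toNat ≠ 0 := by omega
        exact List.ne_nil_of_length_pos (by simp; omega)
      · intro x hx; simp at hx; omega
      · have hm : (c-1).toNat = ((c-1).toNat - 1) + 1 := by omega
        have hmap : (List.replicate (c-1).toNat (2:ℤ)).map (fun x : ℤ => (x:ℚ))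
            = List.replicate (c-1).toNat (2:ℚ) := by
          rw [List.map_replicate]; norm_num
        rw [hmap, hm, cfracQ_replicate]
        have hcast : (((c-1).toNat - 1 : ℕ) : ℚ) = (c:ℚ) - 2 := by
          have h1 : (((c-1).toNat - 1 : ℕ) : ℤ) = c - 2 := by omega
          exact_mod_cast congrArg (fun z : ℤ => (z : ℚ)) h1
        rw [hcast]
        have hc2 : (2:ℚ) ≤ (c:ℚ) := by exact_mod_cast hc
        have h1 : (c:ℚ) ≠ 0 := by linarith
        have h2 : (c:ℚ) - 1 ≠ 0 := by linarith
        simp [cfracQ]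
        field_simp
        ring
    | cons d rest' =>
      obtain ⟨M, hMne, hM2, hMeq⟩ := ih (by simp) (fun x hx => h x (by simp at hx ⊢; tauto))
      obtain ⟨b, Mt, rfl⟩ := List.exists_cons_of_ne_nil hMne
      set α := cfracQ ((d :: rest').map (fun x : ℤ => (x:ℚ))) with hαdef
      set β := cfracQ ((b :: Mt).map (fun x : ℤ => (x:ℚ))) with hβdef
      have hα1 : 1 < α := by
        apply cfracQ_gt_one _ (by simp)
        intro x hx
        rw [List.mem_map] at hx
        obtain ⟨z, hz, rfl⟩ := hx
        have : (2:ℤ) ≤ z := h z (by simp at hz ⊢; tauto)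
        exact_mod_cast this
      have hβ1 : 1 < β := by
        apply cfracQ_gt_one _ (by simp)
        intro x hx
        rw [List.mem_map] at hx
        obtain ⟨z, hz, rfl⟩ := hx
        have : (2:ℤ) ≤ z := hM2 z hz
        exact_mod_cast this
      refine ⟨List.replicate (c-2).toNat 2 ++ (b+1) :: Mt, by simp, ?_, ?_⟩
      · intro x hx
        simp at hx
        rcases hx with hx | hx | hx
        · omega
        · have := hM2 b (by simp); omega
        · have := hM2 x (by simp [hx]); omega
      · -- compute value of the new dual
        have hmap : (List.replicate (c-2).toNat 2 ++ (b+1) :: Mt).map (fun x : ℤ => (x:ℚ))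
            = List.replicate (c-2).toNat (2:ℚ) ++ ((b:ℚ)+1) :: Mt.map (fun x : ℤ => (x:ℚ)) := by
          rw [List.map_append, List.map_replicate, List.map_cons]
          norm_num
        have hhead : cfracQ (((b:ℚ)+1) :: Mt.map (fun x : ℤ => (x:ℚ))) = β + 1 := by
          rw [cfracQ_head_add_one]; rfl
        have hβ'1 : 1 < β + 1 := by linarith
        set j : ℕ := (c-2).toNat with hjdef
        have hjc : (j:ℚ) = (c:ℚ) - 2 := by
          have : (j:ℤ) = c - 2 := by simp [hjdef]; omega
          exact_mod_cast this
        rw [hmap, cfracQ_replicate_append j _ (by simp) (by rw [hhead]; exact hβ'1), hhead]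
        -- α' = c - 1/α
        have hα' : cfracQ ((c :: d :: rest').map (fun x : ℤ => (x:ℚ))) = (c:ℚ) - 1/α := by
          rw [List.map_cons, cfracQ_cons _ (by simp)]
        rw [hα']
        have hαne : α ≠ 0 := by linarith
        have hβne : β ≠ 0 := by linarith
        have hα'pos : (c:ℚ) - 1/α > 1 := by
          have h2c : (2:ℚ) ≤ c := by exact_mod_cast hc
          have : 1/α < 1 := by rw [div_lt_one (by linarith)]; linarith
          have : 0 < 1/α := by positivity
          linarith
        have hα'ne : (c:ℚ) - 1/α ≠ 0 := by linarith
        have hdenpos : (j:ℚ) * (β+1) - j + 1 > 0 := by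
          have : (0:ℚ) ≤ j := Nat.cast_nonneg j
          nlinarith
        have hnumpos : ((j:ℚ) + 1) * (β+1) - j > 0 := by
          have : (0:ℚ) ≤ j := Nat.cast_nonneg j
          nlinarith
        have hrel : α + β = α * β := by
          have := hMeq
          field_simp at this
          linarith [this]
        have hcq : (2:ℚ) ≤ (c:ℚ) := by exact_mod_cast hc
        have hca : (c:ℚ) * α - 1 ≠ 0 := by nlinarith
        have e1 : 1 / ((c:ℚ) - 1/α) = α / ((c:ℚ)*α - 1) := by
          rw [div_eq_div_iff hα'ne hca]
          field_simp
        have hd2num : ((c:ℚ) - 2 + 1) * (β+1) - ((c:ℚ)-2) = ((c:ℚ)-1)*β + 1 := by ring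
        have hd2den : ((c:ℚ)-2) * (β+1) - (((c:ℚ)-2)) + 1 = ((c:ℚ)-2)*β + 1 := by ring
        rw [hjc, hd2num, hd2den, one_div_div, e1]
        have hn2 : ((c:ℚ)-1)*β + 1 ≠ 0 := by nlinarith
        rw [div_add_div _ _ hca hn2, div_eq_one_iff_eq (mul_ne_zero hca hn2)]
        linear_combination hrel

/-- For integers `k₁,…,kₙ ≥ 2` with `α = [kₙ, kₙ₋₁, …, k₁]`, there are integers
`l₁,…,lₘ ≥ 2`, `m ≥ 1`, with `1/α + 1/[lₘ, lₘ₋₁, …, l₁] = 1`. -/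
theorem dual_continued_fraction (n : ℕ) (hn : 1 ≤ n) (k : Fin n → ℤ)
    (hk : ∀ j, 2 ≤ k j)
    (α : ℚ) (hα : α = cfracQ ((List.ofFn fun j => (k j : ℚ)).reverse)) :
    ∃ (m : ℕ) (l : Fin m → ℤ), 1 ≤ m ∧ (∀ j, 2 ≤ l j) ∧
      1 / α + 1 / cfracQ ((List.ofFn fun j => (l j : ℚ)).reverse) = 1 := by
  obtain ⟨M, hMne, hM2, hMeq⟩ := key ((List.ofFn k).reverse)
    (by simp; omega)
    (by
      intro x hx
      rw [List.mem_reverse, List.mem_ofFn] at hx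
      obtain ⟨j, rfl⟩ := hx
      exact hk j)
  have hL : (List.ofFn fun j => (k j : ℚ)).reverse
      = ((List.ofFn k).reverse).map (fun x : ℤ => (x:ℚ)) := by
    rw [List.map_reverse, List.map_ofFn]
    rfl
  obtain ⟨N, hN⟩ : ∃ N, N = M.reverse := ⟨M.reverse, rfl⟩
  have hMN : M = N.reverse := by rw [hN, List.reverse_reverse]
  refine ⟨N.length, fun j => N.get j, ?_, ?_, ?_⟩
  · rw [hN, List.length_reverse]
    exact List.length_pos_iff.mpr hMne
  · intro j
    apply hM2
    rw [hMN]
    exact List.mem_reverse.mpr (List.get_mem N j)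
  · have hmap : (List.ofFn fun j => ((N.get j : ℤ) : ℚ)).reverse
        = M.map (fun x : ℤ => (x:ℚ)) := by
      have h1 : (List.ofFn fun j => ((N.get j : ℤ) : ℚ))
          = (List.ofFn N.get).map (fun x : ℤ => (x:ℚ)) := by
        rw [List.map_ofFn]
        rfl
      rw [h1, List.ofFn_get, ← List.map_reverse, ← hMN]
    rw [hmap, hα, hL]
    exact hMeq
end

section
/- Let n, m be positive integers and consider the linear vector field Z₁ = n x ∂/∂x − m y ∂/∂y on ℂ². Suppose G(x,y) = (x·u(x,y), y·v(x,y)), where u and v are holomorphic and nonvanishing on a set of the form {(x,y) : 0 < |x| < ε, |y| < ε} ∪ {(x,y) : |x| < ε, 0 <|y| < ε} minus {x = 0}, i.e. on a punctured neighborhood of 0 minus the axis {x = 0}, and suppose G preserves Z₁ (G_* Z₁ = Z₁). Then n x u_x − m y u_y = 0 and n x v_x − m y v_y = 0, and consequently u and v extend holomorphically across {x = 0}, so G extends to a biholomorphism of a neighborhood of 0 preserving Z₁. -/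
open Metric

/-- The linear vector field `Z₁ = n x ∂/∂x − m y ∂/∂y` on `ℂ²`. -/
def Zlin (n m : ℕ) (p : ℂ × ℂ) : ℂ × ℂ := ((n : ℂ) * p.1, -(m : ℂ) * p.2)

open Metric Set Filter Complex Asymptotics Topology

set_option maxHeartbeats 1600000

lemma clm_decomp (L : ℂ × ℂ →L[ℂ] ℂ) (a b : ℂ) : L (a, b) = a * L (1, 0) + b * L (0, 1) := by
  have h : (a, b) = a • ((1 : ℂ), (0 : ℂ)) + b • ((0 : ℂ), (1 : ℂ)) := by
    simp [Prod.ext_iff]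
  rw [h, map_add, map_smul, map_smul, smul_eq_mul, smul_eq_mul]

lemma sliceX {f : ℂ × ℂ → ℂ} {p : ℂ × ℂ} (h : DifferentiableAt ℂ f p) :
    HasDerivAt (fun x => f (x, p.2)) (fderiv ℂ f p (1, 0)) p.1 := by
  have hγ : HasDerivAt (fun x : ℂ => (x, p.2)) ((1 : ℂ), (0 : ℂ)) p.1 :=
    (hasDerivAt_id p.1).prodMk (hasDerivAt_const p.1 p.2)
  exact h.hasFDerivAt.comp_hasDerivAt p.1 hγ

lemma sliceY {f : ℂ × ℂ → ℂ} {p : ℂ × ℂ} (h : DifferentiableAt ℂ f p) :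
    HasDerivAt (fun y => f (p.1, y)) (fderiv ℂ f p (0, 1)) p.2 := by
  have hγ : HasDerivAt (fun y : ℂ => (p.1, y)) ((0 : ℂ), (1 : ℂ)) p.2 :=
    (hasDerivAt_const p.2 p.1).prodMk (hasDerivAt_id p.2)
  exact h.hasFDerivAt.comp_hasDerivAt p.2 hγ

/-- Quantitative Schwarz-type bounds for a bounded holomorphic function on a disk. -/
lemma taylor_bound {f : ℂ → ℂ} {c : ℂ} {r M : ℝ} (hr : 0 < r)
    (hd : DifferentiableOn ℂ f (ball c r)) (hM : ∀ z ∈ ball c r, ‖f z‖ ≤ M) :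
    ‖deriv f c‖ ≤ (2 * M + 1) / r ∧
    (∀ z ∈ ball c r, ‖f z - f c‖ ≤ ((2 * M + 1) / r) * ‖z - c‖) ∧
    ∀ z ∈ ball c r, ‖f z - f c - deriv f c * (z - c)‖ ≤
      ((2 * ((2 * M + 1) / r) + 1) / r) * ‖z - c‖ ^ 2 := by
  have hM0 : 0 ≤ M := le_trans (norm_nonneg _) (hM c (mem_ball_self hr))
  have hmaps : MapsTo f (ball c r) (ball (f c) (2 * M + 1)) := by
    intro z hz
    have : ‖f z - f c‖ ≤ 2 * M := by
      calc ‖f z - f c‖ ≤ ‖f z‖ + ‖f c‖ := norm_sub_le _ _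
        _ ≤ M + M := add_le_add (hM z hz) (hM c (mem_ball_self hr))
        _ = 2 * M := by ring
    simp only [mem_ball, dist_eq_norm]
    linarith
  have hds : ∀ z ∈ ball c r, ‖dslope f c z‖ ≤ (2 * M + 1) / r := fun z hz =>
    Complex.norm_dslope_le_div_of_mapsTo_ball hd (hmaps.mono_right ball_subset_closedBall) hz
  have hderiv : ‖deriv f c‖ ≤ (2 * M + 1) / r := by
    simpa [dslope_same] using hds c (mem_ball_self hr)
  refine ⟨hderiv, ?_, ?_⟩
  · intro z hz
    rcases eq_or_ne z c with rfl | hne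
    · simp
    · have := hds z hz
      rw [dslope_of_ne _ hne, slope_def_field, div_eq_mul_inv] at this
      have h2 : ‖(f z - f c) * (z - c)⁻¹‖ * ‖z - c‖ ≤ ((2 * M + 1) / r) * ‖z - c‖ :=
        mul_le_mul_of_nonneg_right this (norm_nonneg _)
      calc ‖f z - f c‖ = ‖(f z - f c) * (z - c)⁻¹‖ * ‖z - c‖ := by
            rw [norm_mul, norm_inv, mul_assoc, inv_mul_cancel₀ (by simpa [sub_eq_zero] using hne), mul_one]
        _ ≤ _ := h2
  · -- second order bound via dslope of dslope
    set g := dslope f c with hg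
    have hgd : DifferentiableOn ℂ g (ball c r) :=
      (Complex.differentiableOn_dslope (ball_mem_nhds c hr)).2 hd
    have hgc : g c = deriv f c := dslope_same f c
    have hgmaps : MapsTo g (ball c r) (ball (g c) (2 * ((2 * M + 1) / r) + 1)) := by
      intro z hz
      have h1 : ‖g z - g c‖ ≤ 2 * ((2 * M + 1) / r) := by
        have hb : 0 ≤ (2 * M + 1) / r := by positivity
        calc ‖g z - g c‖ ≤ ‖g z‖ + ‖g c‖ := norm_sub_le _ _
          _ ≤ (2 * M + 1) / r + (2 * M + 1) / r := add_le_add (hds z hz) (hds c (mem_ball_self hr))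
          _ = 2 * ((2 * M + 1) / r) := by ring
      simp only [mem_ball, dist_eq_norm]
      linarith
    have hds2 : ∀ z ∈ ball c r, ‖dslope g c z‖ ≤ (2 * ((2 * M + 1) / r) + 1) / r := fun z hz =>
      Complex.norm_dslope_le_div_of_mapsTo_ball hgd (hgmaps.mono_right ball_subset_closedBall) hz
    intro z hz
    rcases eq_or_ne z c with rfl | hne
    · simp
    · have h1 := hds2 z hz
      rw [dslope_of_ne _ hne, slope_def_field] at h1
      have hzc : (0:ℝ) < ‖z - c‖ := by simpa [norm_pos_iff, sub_eq_zero] using hne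
      have key : f z - f c - deriv f c * (z - c) = ((g z - g c) / (z - c)) * (z - c) ^ 2 := by
        have hgz : g z = (f z - f c) / (z - c) := by
          rw [hg, dslope_of_ne _ hne, slope_def_field]
        rw [← hgc, hgz]
        field_simp [sub_ne_zero.2 hne]
      rw [key, norm_mul, norm_pow]
      gcongr

section S2
variable {f : ℂ × ℂ → ℂ} {S : Set (ℂ × ℂ)}

lemma dist_fst' (p q : ℂ × ℂ) : dist p.1 q.1 ≤ dist p q := by
  rw [Prod.dist_eq]; exact le_max_left _ _
lemma dist_snd' (p q : ℂ × ℂ) : dist p.2 q.2 ≤ dist p q := by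
  rw [Prod.dist_eq]; exact le_max_right _ _

lemma continuousOn_partial_fst (hS : IsOpen S) (hf : DifferentiableOn ℂ f S) :
    ContinuousOn (fun p => fderiv ℂ f p (1, 0)) S := by
  intro p₀ hp₀
  obtain ⟨ε, hε0, hεS⟩ := Metric.isOpen_iff.1 hS p₀ hp₀
  set R := ε / 3 with hR
  have hR0 : 0 < R := by positivity
  have hRS : closedBall p₀ (2 * R) ⊆ S := fun q hq => hεS (by
    simp only [mem_closedBall] at hq; simp only [mem_ball]; linarith)
  obtain ⟨C₀, hC₀⟩ := (isCompact_closedBall p₀ (2 * R)).exists_bound_of_continuousOn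
    (hf.continuousOn.mono hRS)
  set M := max C₀ 0 with hM
  have hM0 : 0 ≤ M := le_max_right _ _
  set C := (2 * ((2 * M + 1) / R) + 1) / R with hC
  have hC0 : 0 ≤ C := by positivity
  set K := closedBall p₀ R with hK
  have hsub : ∀ p ∈ K, ∀ z ∈ ball p.1 R, (z, p.2) ∈ closedBall p₀ (2 * R) := by
    intro p hp z hz
    rw [mem_closedBall, Prod.dist_eq]
    have h1 : dist z p₀.1 ≤ R + R := by
      calc dist z p₀.1 ≤ dist z p.1 + dist p.1 p₀.1 := dist_triangle _ _ _
        _ ≤ R + R := add_le_add (le_of_lt hz) ((dist_fst' p p₀).trans hp)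
    have h2 : dist p.2 p₀.2 ≤ R := (dist_snd' p p₀).trans hp
    simp only [max_le_iff]
    constructor <;> linarith
  have hdiffK : ∀ p ∈ K, DifferentiableAt ℂ f p := fun p hp =>
    hf.differentiableAt (hS.mem_nhds (hRS (closedBall_subset_closedBall (by linarith) hp)))
  have hsl : ∀ p ∈ K, DifferentiableOn ℂ (fun z => f (z, p.2)) (ball p.1 R) := by
    intro p hp z hz
    have : DifferentiableAt ℂ f (z, p.2) := hf.differentiableAt (hS.mem_nhds (hRS (hsub p hp z hz)))
    exact (sliceX this).differentiableAt.differentiableWithinAt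
  have hMb : ∀ p ∈ K, ∀ z ∈ ball p.1 R, ‖f (z, p.2)‖ ≤ M :=
    fun p hp z hz => le_trans (hC₀ _ (hsub p hp z hz)) (le_max_left _ _)
  have hder : ∀ p ∈ K, deriv (fun z => f (z, p.2)) p.1 = fderiv ℂ f p (1, 0) := by
    intro p hp
    have h := sliceX (hdiffK p hp)
    simpa using h.deriv
  -- key Taylor estimate
  have key : ∀ p ∈ K, ∀ h : ℂ, ‖h‖ < R →
      ‖f (p.1 + h, p.2) - f p - fderiv ℂ f p (1, 0) * h‖ ≤ C * ‖h‖ ^ 2 := by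
    intro p hp h hh
    have hz : p.1 + h ∈ ball p.1 R := by
      simp only [mem_ball, dist_eq_norm]; simpa using hh
    have := (taylor_bound hR0 (hsl p hp) (hMb p hp)).2.2 (p.1 + h) hz
    rw [hder p hp] at this
    simpa using this
  set Φ : ℂ × ℂ → ℂ := fun p => fderiv ℂ f p (1, 0) with hΦdef
  set Q : ℂ → (ℂ × ℂ) → ℂ := fun h p => (f (p.1 + h, p.2) - f p) / h with hQ
  have huni : TendstoUniformlyOn Q Φ (𝓝[≠] (0 : ℂ)) K := by
    rw [Metric.tendstoUniformlyOn_iff]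
    intro δ hδ
    have hδ' : 0 < min R (δ / (C + 1)) := lt_min hR0 (by positivity)
    filter_upwards [inter_mem_nhdsWithin {(0:ℂ)}ᶜ (ball_mem_nhds (0:ℂ) hδ')] with h hmem p hp
    obtain ⟨hh0, hball⟩ := hmem
    have hh0' : h ≠ 0 := hh0
    rw [mem_ball, dist_zero_right] at hball
    have hhR : ‖h‖ < R := lt_of_lt_of_le hball (min_le_left _ _)
    have hhδ : ‖h‖ ≤ δ / (C + 1) := le_of_lt (lt_of_lt_of_le hball (min_le_right _ _))
    have hq : Q h p - Φ p = (f (p.1 + h, p.2) - f p - Φ p * h) / h := by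
      simp only [hQ]
      field_simp
    rw [dist_eq_norm, ← norm_neg]
    have : ‖Q h p - Φ p‖ ≤ C * ‖h‖ := by
      rw [hq, norm_div]
      rw [div_le_iff₀ (by simpa using hh0')]
      calc ‖f (p.1 + h, p.2) - f p - Φ p * h‖ ≤ C * ‖h‖ ^ 2 := key p hp h hhR
        _ = C * ‖h‖ * ‖h‖ := by ring
    have h2 : C * ‖h‖ < δ := by
      have : C * ‖h‖ ≤ C * (δ / (C + 1)) := mul_le_mul_of_nonneg_left hhδ hC0
      have h3 : C * (δ / (C + 1)) < δ := by
        rw [mul_div_assoc']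
        rw [div_lt_iff₀ (by positivity)]
        nlinarith
      linarith
    calc ‖-(Φ p - Q h p)‖ = ‖Q h p - Φ p‖ := by rw [neg_sub]
      _ ≤ C * ‖h‖ := this
      _ < δ := h2
  have hQcont : ∀ᶠ h in 𝓝[≠] (0 : ℂ), ContinuousOn (Q h) K := by
    filter_upwards [inter_mem_nhdsWithin {(0:ℂ)}ᶜ (ball_mem_nhds (0:ℂ) hR0)] with h hmem
    obtain ⟨hh0, hball⟩ := hmem
    rw [mem_ball, dist_zero_right] at hball
    have hc1 : ContinuousOn (fun p : ℂ × ℂ => f (p.1 + h, p.2)) K := by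
      apply (hf.continuousOn.mono hRS).comp
      · exact (continuous_fst.add continuous_const).continuousOn.prodMk continuous_snd.continuousOn
      · intro p hp
        apply hsub p hp
        simp only [mem_ball, dist_eq_norm]; simpa using hball
    have hc2 : ContinuousOn f K := hf.continuousOn.mono
      (hK ▸ (closedBall_subset_closedBall (by linarith)).trans hRS)
    exact (hc1.sub hc2).div_const h
  have hΦcont : ContinuousOn Φ K := huni.continuousOn hQcont.frequently
  exact (hΦcont.continuousAt (closedBall_mem_nhds p₀ hR0)).continuousWithinAt

lemma continuousOn_partial_snd (hS : IsOpen S) (hf : DifferentiableOn ℂ f S) :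
    ContinuousOn (fun p => fderiv ℂ f p (0, 1)) S := by
  intro p₀ hp₀
  obtain ⟨ε, hε0, hεS⟩ := Metric.isOpen_iff.1 hS p₀ hp₀
  set R := ε / 3 with hR
  have hR0 : 0 < R := by positivity
  have hRS : closedBall p₀ (2 * R) ⊆ S := fun q hq => hεS (by
    simp only [mem_closedBall] at hq; simp only [mem_ball]; linarith)
  obtain ⟨C₀, hC₀⟩ := (isCompact_closedBall p₀ (2 * R)).exists_bound_of_continuousOn
    (hf.continuousOn.mono hRS)
  set M := max C₀ 0 with hM
  have hM0 : 0 ≤ M := le_max_right _ _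
  set C := (2 * ((2 * M + 1) / R) + 1) / R with hC
  have hC0 : 0 ≤ C := by positivity
  set K := closedBall p₀ R with hK
  have hsub : ∀ p ∈ K, ∀ z ∈ ball p.2 R, (p.1, z) ∈ closedBall p₀ (2 * R) := by
    intro p hp z hz
    rw [mem_closedBall, Prod.dist_eq]
    have h1 : dist z p₀.2 ≤ R + R := by
      calc dist z p₀.2 ≤ dist z p.2 + dist p.2 p₀.2 := dist_triangle _ _ _
        _ ≤ R + R := add_le_add (le_of_lt hz) ((dist_snd' p p₀).trans hp)
    have h2 : dist p.1 p₀.1 ≤ R := (dist_fst' p p₀).trans hp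
    simp only [max_le_iff]
    constructor <;> linarith
  have hdiffK : ∀ p ∈ K, DifferentiableAt ℂ f p := fun p hp =>
    hf.differentiableAt (hS.mem_nhds (hRS (closedBall_subset_closedBall (by linarith) hp)))
  have hsl : ∀ p ∈ K, DifferentiableOn ℂ (fun z => f (p.1, z)) (ball p.2 R) := by
    intro p hp z hz
    have : DifferentiableAt ℂ f (p.1, z) := hf.differentiableAt (hS.mem_nhds (hRS (hsub p hp z hz)))
    exact (sliceY this).differentiableAt.differentiableWithinAt
  have hMb : ∀ p ∈ K, ∀ z ∈ ball p.2 R, ‖f (p.1, z)‖ ≤ M :=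
    fun p hp z hz => le_trans (hC₀ _ (hsub p hp z hz)) (le_max_left _ _)
  have hder : ∀ p ∈ K, deriv (fun z => f (p.1, z)) p.2 = fderiv ℂ f p (0, 1) := by
    intro p hp
    have h := sliceY (hdiffK p hp)
    simpa using h.deriv
  -- key Taylor estimate
  have key : ∀ p ∈ K, ∀ h : ℂ, ‖h‖ < R →
      ‖f (p.1, p.2 + h) - f p - fderiv ℂ f p (0, 1) * h‖ ≤ C * ‖h‖ ^ 2 := by
    intro p hp h hh
    have hz : p.2 + h ∈ ball p.2 R := by
      simp only [mem_ball, dist_eq_norm]; simpa using hh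
    have := (taylor_bound hR0 (hsl p hp) (hMb p hp)).2.2 (p.2 + h) hz
    rw [hder p hp] at this
    simpa using this
  set Φ : ℂ × ℂ → ℂ := fun p => fderiv ℂ f p (0, 1) with hΦdef
  set Q : ℂ → (ℂ × ℂ) → ℂ := fun h p => (f (p.1, p.2 + h) - f p) / h with hQ
  have huni : TendstoUniformlyOn Q Φ (𝓝[≠] (0 : ℂ)) K := by
    rw [Metric.tendstoUniformlyOn_iff]
    intro δ hδ
    have hδ' : 0 < min R (δ / (C + 1)) := lt_min hR0 (by positivity)
    filter_upwards [inter_mem_nhdsWithin {(0:ℂ)}ᶜ (ball_mem_nhds (0:ℂ) hδ')] with h hmem p hp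
    obtain ⟨hh0, hball⟩ := hmem
    have hh0' : h ≠ 0 := hh0
    rw [mem_ball, dist_zero_right] at hball
    have hhR : ‖h‖ < R := lt_of_lt_of_le hball (min_le_left _ _)
    have hhδ : ‖h‖ ≤ δ / (C + 1) := le_of_lt (lt_of_lt_of_le hball (min_le_right _ _))
    have hq : Q h p - Φ p = (f (p.1, p.2 + h) - f p - Φ p * h) / h := by
      simp only [hQ]
      field_simp
    rw [dist_eq_norm, ← norm_neg]
    have : ‖Q h p - Φ p‖ ≤ C * ‖h‖ := by
      rw [hq, norm_div]
      rw [div_le_iff₀ (by simpa using hh0')]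
      calc ‖f (p.1, p.2 + h) - f p - Φ p * h‖ ≤ C * ‖h‖ ^ 2 := key p hp h hhR
        _ = C * ‖h‖ * ‖h‖ := by ring
    have h2 : C * ‖h‖ < δ := by
      have : C * ‖h‖ ≤ C * (δ / (C + 1)) := mul_le_mul_of_nonneg_left hhδ hC0
      have h3 : C * (δ / (C + 1)) < δ := by
        rw [mul_div_assoc']
        rw [div_lt_iff₀ (by positivity)]
        nlinarith
      linarith
    calc ‖-(Φ p - Q h p)‖ = ‖Q h p - Φ p‖ := by rw [neg_sub]
      _ ≤ C * ‖h‖ := this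
      _ < δ := h2
  have hQcont : ∀ᶠ h in 𝓝[≠] (0 : ℂ), ContinuousOn (Q h) K := by
    filter_upwards [inter_mem_nhdsWithin {(0:ℂ)}ᶜ (ball_mem_nhds (0:ℂ) hR0)] with h hmem
    obtain ⟨hh0, hball⟩ := hmem
    rw [mem_ball, dist_zero_right] at hball
    have hc1 : ContinuousOn (fun p : ℂ × ℂ => f (p.1, p.2 + h)) K := by
      apply (hf.continuousOn.mono hRS).comp
      · exact continuous_fst.continuousOn.prodMk (continuous_snd.add continuous_const).continuousOn
      · intro p hp
        apply hsub p hp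
        simp only [mem_ball, dist_eq_norm]; simpa using hball
    have hc2 : ContinuousOn f K := hf.continuousOn.mono
      (hK ▸ (closedBall_subset_closedBall (by linarith)).trans hRS)
    exact (hc1.sub hc2).div_const h
  have hΦcont : ContinuousOn Φ K := huni.continuousOn hQcont.frequently
  exact (hΦcont.continuousAt (closedBall_mem_nhds p₀ hR0)).continuousWithinAt

end S2

lemma omega_open {ε : ℝ} {Ω : Set (ℂ × ℂ)}
    (hΩ : Ω = (ball (0 : ℂ) ε ×ˢ ball (0 : ℂ) ε) \ {p : ℂ × ℂ | p.1 = 0}) : IsOpen Ω := by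
  rw [hΩ]
  exact (isOpen_ball.prod isOpen_ball).sdiff (isClosed_singleton.preimage continuous_fst)

lemma flow_bound {n m : ℕ} (hn : 0 < n) (hm : 0 < m) {ε ρ M : ℝ} (hε : 0 < ε)
    {w : ℂ × ℂ → ℂ} {Ω : Set (ℂ × ℂ)}
    (hΩ : Ω = (ball (0 : ℂ) ε ×ˢ ball (0 : ℂ) ε) \ {p : ℂ × ℂ | p.1 = 0})
    (hw : DifferentiableOn ℂ w Ω)
    (hpde : ∀ p ∈ Ω,
      (n : ℂ) * p.1 * fderiv ℂ w p (1, 0) - (m : ℂ) * p.2 * fderiv ℂ w p (0, 1) = 0)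
    (hρ : ρ < ε)
    (hM : ∀ q ∈ Ω, ‖q.1‖ = ε / 2 → ‖q.2‖ ≤ ρ → ‖w q‖ ≤ M) :
    ∀ p ∈ Ω, ‖p.1‖ ≤ ε / 2 → ‖p.2‖ ≤ ρ → ‖w p‖ ≤ M := by
  have hΩo : IsOpen Ω := omega_open hΩ
  have hzero : ∀ p ∈ Ω, fderiv ℂ w p ((n : ℂ) * p.1, -(m : ℂ) * p.2) = 0 := by
    intro p hp
    rw [clm_decomp]
    linear_combination hpde p hp
  intro p hp hx hy
  set r := ε / 2 with hr
  have hr0 : 0 < r := by positivity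
  have hmemΩ : ∀ q : ℂ × ℂ, q ∈ Ω ↔ (‖q.1‖ < ε ∧ ‖q.2‖ < ε) ∧ q.1 ≠ 0 := by
    intro q
    rw [hΩ]
    simp [Set.mem_prod, mem_ball, dist_zero_right, Set.mem_diff]
  have hx0 : p.1 ≠ 0 := ((hmemΩ p).1 hp).2
  have hxn : 0 < ‖p.1‖ := norm_pos_iff.2 hx0
  have hq1 : (1 : ℝ) ≤ r / ‖p.1‖ := (one_le_div hxn).2 hx
  set T := Real.log (r / ‖p.1‖) / (n : ℝ) with hT
  have hT0 : 0 ≤ T := div_nonneg (Real.log_nonneg hq1) (by positivity)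
  have hnT : Real.exp ((n : ℝ) * T) = r / ‖p.1‖ := by
    rw [hT, mul_div_cancel₀ _ (by positivity : (n : ℝ) ≠ 0)]
    exact Real.exp_log (by positivity)
  set γ : ℝ → ℂ × ℂ :=
    fun s => (Complex.exp ((n : ℂ) * s) * p.1, Complex.exp (-(m : ℂ) * s) * p.2) with hγ
  have hnorm1 : ∀ s : ℝ, ‖(γ s).1‖ = Real.exp ((n : ℝ) * s) * ‖p.1‖ := by
    intro s
    simp only [hγ, norm_mul, Complex.norm_exp]
    norm_num
  have hnorm2 : ∀ s : ℝ, ‖(γ s).2‖ = Real.exp (-((m : ℝ) * s)) * ‖p.2‖ := by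
    intro s
    simp only [hγ, norm_mul, Complex.norm_exp]
    norm_num
  have hmem : ∀ s ∈ Icc (0 : ℝ) T, γ s ∈ Ω ∧ ‖(γ s).2‖ ≤ ρ := by
    intro s hs
    have h1 : ‖(γ s).1‖ ≤ r := by
      rw [hnorm1]
      have hnpos : (0 : ℝ) < (n : ℝ) := by exact_mod_cast hn
      have : Real.exp ((n : ℝ) * s) ≤ Real.exp ((n : ℝ) * T) :=
        Real.exp_le_exp.2 (by nlinarith [hs.1, hs.2])
      rw [hnT] at this
      calc Real.exp ((n : ℝ) * s) * ‖p.1‖ ≤ (r / ‖p.1‖) * ‖p.1‖ :=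
            mul_le_mul_of_nonneg_right this (norm_nonneg _)
        _ = r := div_mul_cancel₀ r (ne_of_gt hxn)
    have h2 : ‖(γ s).2‖ ≤ ρ := by
      rw [hnorm2]
      have he : Real.exp (-((m : ℝ) * s)) ≤ 1 := Real.exp_le_one_iff.2 (by nlinarith [hs.1])
      calc Real.exp (-((m : ℝ) * s)) * ‖p.2‖ ≤ 1 * ‖p.2‖ :=
            mul_le_mul_of_nonneg_right he (norm_nonneg _)
        _ = ‖p.2‖ := one_mul _
        _ ≤ ρ := hy
    refine ⟨(hmemΩ _).2 ⟨⟨lt_of_le_of_lt h1 (by simp [hr]; linarith), lt_of_le_of_lt h2 hρ⟩, ?_⟩, h2⟩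
    exact mul_ne_zero (Complex.exp_ne_zero _) hx0
  have hγderiv : ∀ s : ℝ, HasDerivAt γ
      ((n : ℂ) * (γ s).1, -(m : ℂ) * (γ s).2) s := by
    intro s
    have h1c : HasDerivAt (fun z : ℂ => Complex.exp ((n : ℂ) * z) * p.1)
        (Complex.exp ((n : ℂ) * s) * (n : ℂ) * p.1) (s : ℂ) := by
      have := ((Complex.hasDerivAt_exp ((n : ℂ) * s)).comp (s : ℂ)
        ((hasDerivAt_id (s : ℂ)).const_mul (n : ℂ))).mul_const p.1
      simpa [mul_comm, mul_assoc, mul_left_comm] using this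
    have h2c : HasDerivAt (fun z : ℂ => Complex.exp (-(m : ℂ) * z) * p.2)
        (Complex.exp (-(m : ℂ) * s) * (-(m : ℂ)) * p.2) (s : ℂ) := by
      have := ((Complex.hasDerivAt_exp (-(m : ℂ) * s)).comp (s : ℂ)
        ((hasDerivAt_id (s : ℂ)).const_mul (-(m : ℂ)))).mul_const p.2
      simpa [mul_comm, mul_assoc, mul_left_comm] using this
    have := (h1c.comp_ofReal).prodMk (h2c.comp_ofReal)
    convert this using 2 <;> simp [hγ] <;> ring
  have hconst : w (γ T) = w (γ 0) := by
    have hcontγ : Continuous γ := by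
      apply Continuous.prodMk
      · exact (Complex.continuous_exp.comp (continuous_const.mul Complex.continuous_ofReal)).mul
          continuous_const
      · exact (Complex.continuous_exp.comp (continuous_const.mul Complex.continuous_ofReal)).mul
          continuous_const
    have hcont : ContinuousOn (w ∘ γ) (Icc 0 T) :=
      hw.continuousOn.comp hcontγ.continuousOn (fun s hs => (hmem s hs).1)
    have hder : ∀ s ∈ Ico (0 : ℝ) T, HasDerivWithinAt (w ∘ γ) 0 (Ici s) s := by
      intro s hs
      have hsΩ : γ s ∈ Ω := (hmem s ⟨hs.1, le_of_lt hs.2⟩).1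
      have hwd : HasFDerivAt w (fderiv ℂ w (γ s)) (γ s) :=
        (hw.differentiableAt (hΩo.mem_nhds hsΩ)).hasFDerivAt
      have hcomp := (hwd.restrictScalars ℝ).comp_hasDerivAt s (hγderiv s)
      have h0 : ((fderiv ℂ w (γ s)).restrictScalars ℝ) ((n : ℂ) * (γ s).1, -(m : ℂ) * (γ s).2)
          = 0 := hzero (γ s) hsΩ
      rw [h0] at hcomp
      exact hcomp.hasDerivWithinAt
    exact constant_of_has_deriv_right_zero hcont hder T (right_mem_Icc.2 hT0)
  have hγ0 : γ 0 = p := by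
    simp only [hγ]
    ext <;> simp
  have hends : ‖(γ T).1‖ = ε / 2 := by
    rw [hnorm1, hnT, div_mul_cancel₀ r (ne_of_gt hxn)]
  rw [← hγ0, ← hconst]
  exact hM (γ T) (hmem T (right_mem_Icc.2 hT0)).1 hends (hmem T (right_mem_Icc.2 hT0)).2

lemma omega_mem {ε : ℝ} {Ω : Set (ℂ × ℂ)}
    (hΩ : Ω = (ball (0 : ℂ) ε ×ˢ ball (0 : ℂ) ε) \ {p : ℂ × ℂ | p.1 = 0}) (q : ℂ × ℂ) :
    q ∈ Ω ↔ (‖q.1‖ < ε ∧ ‖q.2‖ < ε) ∧ q.1 ≠ 0 := by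
  rw [hΩ]
  simp [Set.mem_prod, mem_ball, dist_zero_right, Set.mem_diff]

set_option maxHeartbeats 1600000 in
lemma extend_w {n m : ℕ} (hn : 0 < n) (hm : 0 < m) {ε : ℝ} (hε : 0 < ε)
    {w : ℂ × ℂ → ℂ} {Ω : Set (ℂ × ℂ)}
    (hΩ : Ω = (ball (0 : ℂ) ε ×ˢ ball (0 : ℂ) ε) \ {p : ℂ × ℂ | p.1 = 0})
    (hw : DifferentiableOn ℂ w Ω)
    (hpde : ∀ p ∈ Ω,
      (n : ℂ) * p.1 * fderiv ℂ w p (1, 0) - (m : ℂ) * p.2 * fderiv ℂ w p (0, 1) = 0) :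
    ∃ Wx : ℂ × ℂ → ℂ, DifferentiableOn ℂ Wx (ball (0 : ℂ) ε ×ˢ ball (0 : ℂ) ε) ∧
      ∀ p : ℂ × ℂ, p.1 ≠ 0 → Wx p = w p := by
  have hΩo : IsOpen Ω := omega_open hΩ
  set r := ε / 2 with hr
  have hr0 : 0 < r := by positivity
  have hrε : r < ε := by simp only [hr]; linarith
  -- uniform bounds from the flow
  have hB : ∀ ρ : ℝ, 0 ≤ ρ → ρ < ε → ∃ M : ℝ, 0 ≤ M ∧
      ∀ p ∈ Ω, ‖p.1‖ ≤ r → ‖p.2‖ ≤ ρ → ‖w p‖ ≤ M := by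
    intro ρ hρ0 hρε
    set K : Set (ℂ × ℂ) := sphere (0 : ℂ) r ×ˢ closedBall (0 : ℂ) ρ with hK
    have hKΩ : K ⊆ Ω := by
      intro q hq
      obtain ⟨hq1, hq2⟩ := hq
      rw [mem_sphere, dist_zero_right] at hq1
      rw [mem_closedBall, dist_zero_right] at hq2
      refine (omega_mem hΩ q).2 ⟨⟨by linarith, by linarith⟩, ?_⟩
      intro h0
      rw [h0] at hq1
      simp at hq1
      linarith
    obtain ⟨C₀, hC₀⟩ := ((isCompact_sphere (0 : ℂ) r).prod
      (isCompact_closedBall (0 : ℂ) ρ)).exists_bound_of_continuousOn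
      (hw.continuousOn.mono hKΩ)
    refine ⟨max C₀ 0, le_max_right _ _, ?_⟩
    apply flow_bound hn hm hε hΩ hw hpde hρε
    intro q hq hq1 hq2
    refine le_trans (hC₀ q ?_) (le_max_left _ _)
    exact ⟨by rw [mem_sphere, dist_zero_right]; exact hq1, by rw [mem_closedBall, dist_zero_right]; exact hq2⟩
  -- the extension
  set c : ℂ → ℂ := fun y => limUnder (𝓝[≠] (0 : ℂ)) (fun x => w (x, y)) with hc
  set Wx : ℂ × ℂ → ℂ := fun p => if p.1 = 0 then c p.2 else w p with hWx
  have hWeq : ∀ p : ℂ × ℂ, p.1 ≠ 0 → Wx p = w p := fun p hp => if_neg hp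
  refine ⟨Wx, ?_, hWeq⟩
  -- slice differentiability across the puncture
  have hWslice : ∀ y : ℂ, ‖y‖ < ε → DifferentiableOn ℂ (fun x => Wx (x, y)) (ball (0 : ℂ) r) := by
    intro y hy
    obtain ⟨M, hM0, hM⟩ := hB ‖y‖ (norm_nonneg _) hy
    have hd : DifferentiableOn ℂ (fun x => w (x, y)) (ball (0 : ℂ) r \ {0}) := by
      intro x hx
      have hxΩ : ((x, y) : ℂ × ℂ) ∈ Ω := (omega_mem hΩ _).2
        ⟨⟨by have := hx.1; rw [mem_ball, dist_zero_right] at this; linarith, hy⟩, hx.2⟩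
      exact (sliceX (hw.differentiableAt (hΩo.mem_nhds hxΩ))).differentiableAt.differentiableWithinAt
    have hb : BddAbove (norm ∘ (fun x => w (x, y)) '' (ball (0 : ℂ) r \ {0})) := by
      refine ⟨M, ?_⟩
      rintro b ⟨x, hx, rfl⟩
      have hxΩ : ((x, y) : ℂ × ℂ) ∈ Ω := (omega_mem hΩ _).2
        ⟨⟨by have := hx.1; rw [mem_ball, dist_zero_right] at this; linarith, hy⟩, hx.2⟩
      exact hM _ hxΩ (by have := hx.1; rw [mem_ball, dist_zero_right] at this; linarith)
        (le_refl _ |>.trans (le_refl _)) |>.trans (le_refl _) |>.trans (le_refl _)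
    have H := Complex.differentiableOn_update_limUnder_of_bddAbove
      (ball_mem_nhds (0 : ℂ) hr0) hd hb
    have heq : Function.update (fun x => w (x, y)) 0
        (limUnder (𝓝[≠] (0 : ℂ)) (fun x => w (x, y))) = fun x => Wx (x, y) := by
      funext x
      rcases eq_or_ne x 0 with rfl | hx0
      · simp [hWx, hc]
      · rw [Function.update_of_ne hx0]
        exact (hWeq (x, y) hx0).symm
    rwa [heq] at H
  -- Wx(0,y) is a limit of w along the puncture
  have hWx0 : ∀ y : ℂ, Wx (0, y) = c y := fun y => if_pos rfl
  have hWtend : ∀ y : ℂ, ‖y‖ < ε →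
      Tendsto (fun x => w (x, y)) (𝓝[≠] (0 : ℂ)) (𝓝 (c y)) := by
    intro y hy
    have h1 : ContinuousAt (fun x => Wx (x, y)) 0 :=
      ((hWslice y hy).differentiableAt (ball_mem_nhds _ hr0)).continuousAt
    have h2 : Tendsto (fun x => Wx (x, y)) (𝓝[≠] (0 : ℂ)) (𝓝 (c y)) := by
      rw [← hWx0 y]
      exact h1.continuousWithinAt.tendsto
    refine h2.congr' ?_
    filter_upwards [self_mem_nhdsWithin] with x hx
    exact hWeq (x, y) hx
  -- main: differentiability on the bidisk
  intro p hp
  have hp1ε : ‖p.1‖ < ε := by have := hp.1; rwa [mem_ball, dist_zero_right] at this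
  have hp2ε : ‖p.2‖ < ε := by have := hp.2; rwa [mem_ball, dist_zero_right] at this
  rcases ne_or_eq p.1 0 with hp1 | hp1
  · -- away from {x = 0}
    have hopen : IsOpen {q : ℂ × ℂ | q.1 ≠ 0} :=
      isOpen_compl_iff.2 (isClosed_singleton.preimage continuous_fst)
    have heq : Wx =ᶠ[𝓝 p] w :=
      eventuallyEq_of_mem (hopen.mem_nhds hp1) (fun q hq => hWeq q hq)
    have hpΩ : p ∈ Ω := (omega_mem hΩ p).2 ⟨⟨hp1ε, hp2ε⟩, hp1⟩
    exact ((heq.differentiableAt_iff).2 (hw.differentiableAt (hΩo.mem_nhds hpΩ))).differentiableWithinAt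
  · -- on {x = 0} : the hard case
    set y₀ := p.2 with hy₀def
    have hy₀ : ‖y₀‖ < ε := hp2ε
    set δ := (ε - ‖y₀‖) / 2 with hδ
    have hδ0 : 0 < δ := by simp only [hδ]; linarith
    set ρ := (‖y₀‖ + ε) / 2 with hρ
    have hρε : ρ < ε := by simp only [hρ]; linarith
    have hyρ : ∀ y ∈ closedBall y₀ δ, ‖y‖ ≤ ρ := by
      intro y hy
      rw [mem_closedBall, dist_eq_norm] at hy
      calc ‖y‖ = ‖y - y₀ + y₀‖ := by ring_nf
        _ ≤ ‖y - y₀‖ + ‖y₀‖ := norm_add_le _ _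
        _ ≤ δ + ‖y₀‖ := by linarith
        _ = ρ := by rw [hδ, hρ]; ring
    have hyε : ∀ y ∈ closedBall y₀ δ, ‖y‖ < ε := fun y hy => lt_of_le_of_lt (hyρ y hy) hρε
    obtain ⟨M, hM0, hM⟩ := hB ρ (by positivity) hρε
    -- uniform bound for Wx
    have hMW : ∀ y ∈ closedBall y₀ δ, ∀ x ∈ ball (0 : ℂ) r, ‖Wx (x, y)‖ ≤ M := by
      intro y hy x hx
      rw [mem_ball, dist_zero_right] at hx
      rcases eq_or_ne x 0 with rfl | hx0
      · rw [hWx0 y]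
        have := (hWtend y (hyε y hy)).norm
        refine le_of_tendsto this ?_
        filter_upwards [inter_mem_nhdsWithin {(0:ℂ)}ᶜ (ball_mem_nhds (0:ℂ) hr0)] with x' hx'
        obtain ⟨hx'0, hx'b⟩ := hx'
        rw [mem_ball, dist_zero_right] at hx'b
        exact hM (x', y) ((omega_mem hΩ _).2 ⟨⟨by linarith, hyε y hy⟩, hx'0⟩)
          (le_of_lt hx'b) (hyρ y hy)
      · rw [hWeq (x, y) hx0]
        exact hM (x, y) ((omega_mem hΩ _).2 ⟨⟨by linarith, hyε y hy⟩, hx0⟩)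
          (le_of_lt hx) (hyρ y hy)
    set a : ℂ → ℂ := fun y => deriv (fun x => Wx (x, y)) 0 with ha
    set C1 := (2 * M + 1) / r with hC1
    set C := (2 * ((2 * M + 1) / r) + 1) / r with hC
    have hC10 : 0 ≤ C1 := by positivity
    have hC0 : 0 ≤ C := by positivity
    -- Taylor bounds for the slices
    have hTay : ∀ y ∈ closedBall y₀ δ,
        (∀ x ∈ ball (0 : ℂ) r, ‖Wx (x, y) - c y‖ ≤ C1 * ‖x‖) ∧
        (∀ x ∈ ball (0 : ℂ) r, ‖Wx (x, y) - c y - a y * x‖ ≤ C * ‖x‖ ^ 2) := by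
      intro y hy
      have h := taylor_bound hr0 (hWslice y (hyε y hy)) (hMW y hy)
      constructor
      · intro x hx
        have := h.2.1 x hx
        simpa [hWx0 y] using this
      · intro x hx
        have := h.2.2 x hx
        simpa [hWx0 y] using this
    -- c is holomorphic near y₀
    have hculim : TendstoUniformlyOn (fun (x : ℂ) (y : ℂ) => w (x, y)) c
        (𝓝[≠] (0 : ℂ)) (ball y₀ δ) := by
      rw [Metric.tendstoUniformlyOn_iff]
      intro η hη
      have hδ1 : 0 < min r (η / (C1 + 1)) := lt_min hr0 (by positivity)
      filter_upwards [inter_mem_nhdsWithin {(0:ℂ)}ᶜ (ball_mem_nhds (0:ℂ) hδ1)] with x hx y hy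
      obtain ⟨hx0, hxb⟩ := hx
      rw [mem_ball, dist_zero_right] at hxb
      have hxr : ‖x‖ < r := lt_of_lt_of_le hxb (min_le_left _ _)
      have hxη : ‖x‖ ≤ η / (C1 + 1) := le_of_lt (lt_of_lt_of_le hxb (min_le_right _ _))
      have hyc : y ∈ closedBall y₀ δ := ball_subset_closedBall hy
      have h1 := (hTay y hyc).1 x (by rw [mem_ball, dist_zero_right]; exact hxr)
      rw [hWeq (x, y) hx0] at h1
      rw [dist_eq_norm]
      have : C1 * ‖x‖ < η := by
        have h2 : C1 * ‖x‖ ≤ C1 * (η / (C1 + 1)) := mul_le_mul_of_nonneg_left hxη hC10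
        have h3 : C1 * (η / (C1 + 1)) < η := by
          rw [mul_div_assoc', div_lt_iff₀ (by positivity)]
          nlinarith
        linarith
      calc ‖c y - w (x, y)‖ = ‖w (x, y) - c y‖ := by rw [norm_sub_rev]
        _ ≤ C1 * ‖x‖ := h1
        _ < η := this
    have hFd : ∀ᶠ x in 𝓝[≠] (0 : ℂ), DifferentiableOn ℂ (fun y => w (x, y)) (ball y₀ δ) := by
      filter_upwards [inter_mem_nhdsWithin {(0:ℂ)}ᶜ (ball_mem_nhds (0:ℂ) hε)] with x hx
      obtain ⟨hx0, hxb⟩ := hx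
      rw [mem_ball, dist_zero_right] at hxb
      intro y hy
      have hyΩ : ((x, y) : ℂ × ℂ) ∈ Ω := (omega_mem hΩ _).2
        ⟨⟨hxb, hyε y (ball_subset_closedBall hy)⟩, hx0⟩
      exact (sliceY (hw.differentiableAt (hΩo.mem_nhds hyΩ))).differentiableAt.differentiableWithinAt
    have hcdiff : DifferentiableOn ℂ c (ball y₀ δ) :=
      (hculim.tendstoLocallyUniformlyOn).differentiableOn hFd isOpen_ball
    have hccont : ContinuousOn c (ball y₀ δ) := hcdiff.continuousOn
    -- a is continuous at y₀
    have haulim : TendstoUniformlyOn (fun (x : ℂ) (y : ℂ) => (w (x, y) - c y) / x) a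
        (𝓝[≠] (0 : ℂ)) (ball y₀ δ) := by
      rw [Metric.tendstoUniformlyOn_iff]
      intro η hη
      have hδ1 : 0 < min r (η / (C + 1)) := lt_min hr0 (by positivity)
      filter_upwards [inter_mem_nhdsWithin {(0:ℂ)}ᶜ (ball_mem_nhds (0:ℂ) hδ1)] with x hx y hy
      obtain ⟨hx0, hxb⟩ := hx
      have hx0' : (x : ℂ) ≠ 0 := hx0
      rw [mem_ball, dist_zero_right] at hxb
      have hxr : ‖x‖ < r := lt_of_lt_of_le hxb (min_le_left _ _)
      have hxη : ‖x‖ ≤ η / (C + 1) := le_of_lt (lt_of_lt_of_le hxb (min_le_right _ _))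
      have hyc : y ∈ closedBall y₀ δ := ball_subset_closedBall hy
      have h1 := (hTay y hyc).2 x (by rw [mem_ball, dist_zero_right]; exact hxr)
      rw [hWeq (x, y) hx0'] at h1
      rw [dist_eq_norm]
      have hkey : a y - (w (x, y) - c y) / x = -((w (x, y) - c y - a y * x) / x) := by
        field_simp
        ring
      have hxpos : (0 : ℝ) < ‖x‖ := norm_pos_iff.2 hx0'
      rw [hkey, norm_neg, norm_div]
      have h2 : ‖w (x, y) - c y - a y * x‖ / ‖x‖ ≤ C * ‖x‖ := by
        rw [div_le_iff₀ hxpos]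
        calc ‖w (x, y) - c y - a y * x‖ ≤ C * ‖x‖ ^ 2 := h1
          _ = C * ‖x‖ * ‖x‖ := by ring
      have h3 : C * ‖x‖ < η := by
        have h4 : C * ‖x‖ ≤ C * (η / (C + 1)) := mul_le_mul_of_nonneg_left hxη hC0
        have h5 : C * (η / (C + 1)) < η := by
          rw [mul_div_assoc', div_lt_iff₀ (by positivity)]
          nlinarith
        linarith
      linarith
    have hQcont : ∀ᶠ x in 𝓝[≠] (0 : ℂ),
        ContinuousOn (fun y => (w (x, y) - c y) / x) (ball y₀ δ) := by
      filter_upwards [hFd] with x hx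
      exact ((hx.continuousOn).sub hccont).div_const x
    have hacont : ContinuousAt a y₀ := by
      have h1 : ContinuousOn a (ball y₀ δ) := haulim.continuousOn hQcont.frequently
      exact h1.continuousAt (ball_mem_nhds _ hδ0)
    have hc' : HasDerivAt c (deriv c y₀) y₀ :=
      (hcdiff.differentiableAt (ball_mem_nhds _ hδ0)).hasDerivAt
    -- assemble the derivative
    set L : ℂ × ℂ →L[ℂ] ℂ := a y₀ • ContinuousLinearMap.fst ℂ ℂ ℂ +
      deriv c y₀ • ContinuousLinearMap.snd ℂ ℂ ℂ with hL
    have hLapp : ∀ q : ℂ × ℂ, L q = a y₀ * q.1 + deriv c y₀ * q.2 := by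
      intro q
      simp [hL]
    have hmain : HasFDerivAt Wx L (0, y₀) := by
      rw [hasFDerivAt_iff_isLittleO, Asymptotics.isLittleO_iff]
      intro C' hC'
      set η := C' / 3 with hη
      have hη0 : 0 < η := by positivity
      set δ₁ := min r (min δ (η / (C + 1))) with hδ₁
      have hδ₁0 : 0 < δ₁ := lt_min hr0 (lt_min hδ0 (by positivity))
      have E1 : ∀ᶠ q : ℂ × ℂ in 𝓝 (0, y₀), ‖q.1‖ < δ₁ ∧ ‖q.2 - y₀‖ < δ₁ := by
        have : Tendsto (fun q : ℂ × ℂ => (q.1, q.2 - y₀)) (𝓝 (0, y₀)) (𝓝 (0, 0)) := by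
          apply Filter.Tendsto.prodMk_nhds
          · exact continuous_fst.tendsto' _ _ rfl
          · have : Tendsto (fun q : ℂ × ℂ => q.2 - y₀) (𝓝 (0, y₀)) (𝓝 (y₀ - y₀)) :=
              (continuous_snd.sub continuous_const).tendsto' _ _ rfl
            simpa using this
        have hb : ball ((0 : ℂ), (0 : ℂ)) δ₁ ∈ 𝓝 ((0 : ℂ), (0 : ℂ)) := ball_mem_nhds _ hδ₁0
        filter_upwards [this hb] with q hq
        simp only [Set.mem_preimage, mem_ball, Prod.dist_eq, dist_zero_right] at hq
        exact ⟨lt_of_le_of_lt (le_max_left _ _) hq, lt_of_le_of_lt (le_max_right _ _) hq⟩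
      have E2 : ∀ᶠ q : ℂ × ℂ in 𝓝 (0, y₀), ‖a q.2 - a y₀‖ < η := by
        have h1 : ∀ᶠ y in 𝓝 y₀, ‖a y - a y₀‖ < η := by
          have := hacont.tendsto
          rw [Metric.tendsto_nhds] at this
          filter_upwards [this η hη0] with y hy
          rwa [dist_eq_norm] at hy
        exact (continuous_snd.tendsto (((0 : ℂ), y₀) : ℂ × ℂ)).eventually h1
      have E3 : ∀ᶠ q : ℂ × ℂ in 𝓝 (0, y₀), ‖c q.2 - c y₀ - (q.2 - y₀) • deriv c y₀‖ ≤
          η * ‖q.2 - y₀‖ := by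
        have h1 := (hasDerivAt_iff_isLittleO.1 hc')
        have h2 := Asymptotics.isLittleO_iff.1 h1 hη0
        exact (continuous_snd.tendsto (((0 : ℂ), y₀) : ℂ × ℂ)).eventually h2
      filter_upwards [E1, E2, E3] with q hq1 hq2 hq3
      obtain ⟨hqx, hqy⟩ := hq1
      set x := q.1 with hxdef
      set y := q.2 with hydef
      have hyδ : y ∈ closedBall y₀ δ := by
        rw [mem_closedBall, dist_eq_norm]
        exact le_of_lt (lt_of_lt_of_le hqy ((min_le_right _ _).trans (min_le_left _ _)))
      have hxr : x ∈ ball (0 : ℂ) r := by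
        rw [mem_ball, dist_zero_right]
        exact lt_of_lt_of_le hqx (min_le_left _ _)
      have hT := (hTay y hyδ).2 x hxr
      -- the three term decomposition
      have hdecomp : Wx q - Wx (0, y₀) - L (q - (0, y₀)) =
          (Wx (x, y) - c y - a y * x) + ((a y - a y₀) * x) +
          (c y - c y₀ - (y - y₀) • deriv c y₀) := by
        have hq' : q = (x, y) := rfl
        rw [hq', hLapp, hWx0 y₀]
        simp only [Prod.fst_sub, Prod.snd_sub, smul_eq_mul]
        ring_nf
      rw [hdecomp]
      have hb1 : ‖Wx (x, y) - c y - a y * x‖ ≤ η * ‖x‖ := by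
        refine le_trans hT ?_
        have hxη : ‖x‖ ≤ η / (C + 1) :=
          le_of_lt (lt_of_lt_of_le hqx ((min_le_right _ _).trans (min_le_right _ _)))
        have : C * ‖x‖ ≤ η := by
          have h4 : C * ‖x‖ ≤ C * (η / (C + 1)) := mul_le_mul_of_nonneg_left hxη hC0
          have h5 : C * (η / (C + 1)) ≤ η := by
            rw [mul_div_assoc', div_le_iff₀ (by positivity)]
            nlinarith
          linarith
        calc C * ‖x‖ ^ 2 = (C * ‖x‖) * ‖x‖ := by ring
          _ ≤ η * ‖x‖ := mul_le_mul_of_nonneg_right this (norm_nonneg _)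
      have hb2 : ‖(a y - a y₀) * x‖ ≤ η * ‖x‖ := by
        rw [norm_mul]
        exact mul_le_mul_of_nonneg_right (le_of_lt hq2) (norm_nonneg _)
      have hxle : ‖x‖ ≤ ‖q - ((0 : ℂ), y₀)‖ :=
        calc ‖x‖ = ‖(q - ((0 : ℂ), y₀)).1‖ := by norm_num; rfl
          _ ≤ ‖q - ((0 : ℂ), y₀)‖ := norm_fst_le _
      have hyle : ‖y - y₀‖ ≤ ‖q - ((0 : ℂ), y₀)‖ :=
        calc ‖y - y₀‖ = ‖(q - ((0 : ℂ), y₀)).2‖ := by norm_num; rfl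
          _ ≤ ‖q - ((0 : ℂ), y₀)‖ := norm_snd_le _
      calc ‖Wx (x, y) - c y - a y * x + (a y - a y₀) * x +
            (c y - c y₀ - (y - y₀) • deriv c y₀)‖
          ≤ ‖Wx (x, y) - c y - a y * x + (a y - a y₀) * x‖ +
            ‖c y - c y₀ - (y - y₀) • deriv c y₀‖ := norm_add_le _ _
        _ ≤ (‖Wx (x, y) - c y - a y * x‖ + ‖(a y - a y₀) * x‖) +
            ‖c y - c y₀ - (y - y₀) • deriv c y₀‖ := by
            gcongr
            exact norm_add_le _ _
        _ ≤ (η * ‖x‖ + η * ‖x‖) + η * ‖y - y₀‖ := by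
            gcongr
        _ ≤ (η * ‖q - ((0 : ℂ), y₀)‖ + η * ‖q - ((0 : ℂ), y₀)‖) +
            η * ‖q - ((0 : ℂ), y₀)‖ := by gcongr
        _ = C' * ‖q - ((0 : ℂ), y₀)‖ := by rw [hη]; ring
    have hp0 : p = ((0 : ℂ), y₀) := Prod.ext hp1 rfl
    rw [hp0]
    exact hmain.differentiableAt.differentiableWithinAt

lemma pde_from_dense {n m : ℕ} {ε : ℝ} (hε : 0 < ε) {v : ℂ × ℂ → ℂ} {Ω : Set (ℂ × ℂ)}
    (hΩ : Ω = (ball (0 : ℂ) ε ×ˢ ball (0 : ℂ) ε) \ {p : ℂ × ℂ | p.1 = 0})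
    (hv : DifferentiableOn ℂ v Ω)
    (h : ∀ p ∈ Ω, p.2 ≠ 0 →
      (n : ℂ) * p.1 * fderiv ℂ v p (1, 0) - (m : ℂ) * p.2 * fderiv ℂ v p (0, 1) = 0) :
    ∀ p ∈ Ω, (n : ℂ) * p.1 * fderiv ℂ v p (1, 0) - (m : ℂ) * p.2 * fderiv ℂ v p (0, 1) = 0 := by
  have hΩo : IsOpen Ω := omega_open hΩ
  set g : ℂ × ℂ → ℂ := fun p =>
    (n : ℂ) * p.1 * fderiv ℂ v p (1, 0) - (m : ℂ) * p.2 * fderiv ℂ v p (0, 1) with hg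
  have hgc : ContinuousOn g Ω := by
    apply ContinuousOn.sub
    · exact (continuousOn_const.mul continuous_fst.continuousOn).mul
        (continuousOn_partial_fst hΩo hv)
    · exact (continuousOn_const.mul continuous_snd.continuousOn).mul
        (continuousOn_partial_snd hΩo hv)
  intro p hp
  rcases ne_or_eq p.2 0 with h2 | h2
  · exact h p hp h2
  · obtain ⟨⟨hp1, hp2⟩, hp0⟩ := (omega_mem hΩ p).1 hp
    have hcont : ContinuousAt g p := hgc.continuousAt (hΩo.mem_nhds hp)
    have hpath : Tendsto (fun t : ℂ => ((p.1, t) : ℂ × ℂ)) (𝓝[≠] 0) (𝓝 p) := by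
      have h1 : Tendsto (fun t : ℂ => ((p.1, t) : ℂ × ℂ)) (𝓝 0) (𝓝 (p.1, 0)) :=
        (continuous_const.prodMk continuous_id).tendsto' _ _ rfl
      rw [show ((p.1, (0 : ℂ)) : ℂ × ℂ) = p from Prod.ext rfl h2.symm] at h1
      exact h1.mono_left nhdsWithin_le_nhds
    have hA : Tendsto (fun t : ℂ => g (p.1, t)) (𝓝[≠] 0) (𝓝 (g p)) :=
      hcont.tendsto.comp hpath
    have hB : Tendsto (fun t : ℂ => g (p.1, t)) (𝓝[≠] (0 : ℂ)) (𝓝 0) := by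
      have h3 : ∀ᶠ t in 𝓝[≠] (0 : ℂ), g (p.1, t) = 0 := by
        filter_upwards [inter_mem_nhdsWithin {(0 : ℂ)}ᶜ (ball_mem_nhds (0 : ℂ) hε)] with t ht
        obtain ⟨ht0, htb⟩ := ht
        rw [mem_ball, dist_zero_right] at htb
        exact h (p.1, t) ((omega_mem hΩ _).2 ⟨⟨hp1, htb⟩, hp0⟩) ht0
      exact Tendsto.congr' (h3.mono fun t ht => ht.symm) tendsto_const_nhds
    exact tendsto_nhds_unique hA hB

lemma pde_extend {n m : ℕ} {ε : ℝ} (hε : 0 < ε) {f : ℂ × ℂ → ℂ} {Ω : Set (ℂ × ℂ)}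
    (hΩ : Ω = (ball (0 : ℂ) ε ×ˢ ball (0 : ℂ) ε) \ {p : ℂ × ℂ | p.1 = 0})
    (hf : DifferentiableOn ℂ f (ball (0 : ℂ) ε ×ˢ ball (0 : ℂ) ε))
    (hpde : ∀ p ∈ Ω,
      (n : ℂ) * p.1 * fderiv ℂ f p (1, 0) - (m : ℂ) * p.2 * fderiv ℂ f p (0, 1) = 0) :
    ∀ p ∈ ball (0 : ℂ) ε ×ˢ ball (0 : ℂ) ε,
      (n : ℂ) * p.1 * fderiv ℂ f p (1, 0) - (m : ℂ) * p.2 * fderiv ℂ f p (0, 1) = 0 := by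
  have hDo : IsOpen (ball (0 : ℂ) ε ×ˢ ball (0 : ℂ) ε) := isOpen_ball.prod isOpen_ball
  set g : ℂ × ℂ → ℂ := fun p =>
    (n : ℂ) * p.1 * fderiv ℂ f p (1, 0) - (m : ℂ) * p.2 * fderiv ℂ f p (0, 1) with hg
  have hgc : ContinuousOn g (ball (0 : ℂ) ε ×ˢ ball (0 : ℂ) ε) := by
    apply ContinuousOn.sub
    · exact (continuousOn_const.mul continuous_fst.continuousOn).mul
        (continuousOn_partial_fst hDo hf)
    · exact (continuousOn_const.mul continuous_snd.continuousOn).mul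
        (continuousOn_partial_snd hDo hf)
  intro p hp
  have hp1 : ‖p.1‖ < ε := by have := hp.1; rwa [mem_ball, dist_zero_right] at this
  have hp2 : ‖p.2‖ < ε := by have := hp.2; rwa [mem_ball, dist_zero_right] at this
  rcases ne_or_eq p.1 0 with h0 | h0
  · exact hpde p ((omega_mem hΩ p).2 ⟨⟨hp1, hp2⟩, h0⟩)
  · have hcont : ContinuousAt g p := hgc.continuousAt (hDo.mem_nhds hp)
    have hpath : Tendsto (fun t : ℂ => ((t, p.2) : ℂ × ℂ)) (𝓝[≠] 0) (𝓝 p) := by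
      have h1 : Tendsto (fun t : ℂ => ((t, p.2) : ℂ × ℂ)) (𝓝 0) (𝓝 (0, p.2)) :=
        (continuous_id.prodMk continuous_const).tendsto' _ _ rfl
      rw [show (((0 : ℂ), p.2) : ℂ × ℂ) = p from Prod.ext h0.symm rfl] at h1
      exact h1.mono_left nhdsWithin_le_nhds
    have hA : Tendsto (fun t : ℂ => g (t, p.2)) (𝓝[≠] 0) (𝓝 (g p)) :=
      hcont.tendsto.comp hpath
    have hB : Tendsto (fun t : ℂ => g (t, p.2)) (𝓝[≠] (0 : ℂ)) (𝓝 0) := by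
      have h3 : ∀ᶠ t in 𝓝[≠] (0 : ℂ), g (t, p.2) = 0 := by
        filter_upwards [inter_mem_nhdsWithin {(0 : ℂ)}ᶜ (ball_mem_nhds (0 : ℂ) hε)] with t ht
        obtain ⟨ht0, htb⟩ := ht
        rw [mem_ball, dist_zero_right] at htb
        exact hpde (t, p.2) ((omega_mem hΩ _).2 ⟨⟨htb, hp2⟩, ht0⟩)
      exact Tendsto.congr' (h3.mono fun t ht => ht.symm) tendsto_const_nhds
    exact tendsto_nhds_unique hA hB

lemma axis_const {ε : ℝ} (hε : 0 < ε) {f : ℂ × ℂ → ℂ}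
    (hf : DifferentiableOn ℂ f (ball (0 : ℂ) ε ×ˢ ball (0 : ℂ) ε))
    (hd : ∀ x : ℂ, ‖x‖ < ε → x ≠ 0 → fderiv ℂ f ((x, 0) : ℂ × ℂ) (1, 0) = 0) :
    ∀ x : ℂ, ‖x‖ < ε → f (x, 0) = f (0, 0) := by
  have hDo : IsOpen (ball (0 : ℂ) ε ×ˢ ball (0 : ℂ) ε) := isOpen_ball.prod isOpen_ball
  have hmem : ∀ x : ℂ, ‖x‖ < ε → ((x, 0) : ℂ × ℂ) ∈ ball (0 : ℂ) ε ×ˢ ball (0 : ℂ) ε := by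
    intro x hx
    refine ⟨?_, ?_⟩
    · simpa [mem_ball, dist_zero_right] using hx
    · simpa [mem_ball] using hε

  -- the partial derivative vanishes also at x = 0 by continuity
  have hd0 : fderiv ℂ f ((0, 0) : ℂ × ℂ) (1, 0) = 0 := by
    have hgc := continuousOn_partial_fst hDo hf
    have hcont : ContinuousAt (fun p => fderiv ℂ f p (1, 0)) ((0 : ℂ), (0 : ℂ)) :=
      hgc.continuousAt (hDo.mem_nhds (hmem 0 (by simpa using hε)))
    have hpath : Tendsto (fun t : ℂ => ((t, 0) : ℂ × ℂ)) (𝓝[≠] 0) (𝓝 (0, 0)) :=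
      ((continuous_id.prodMk continuous_const).tendsto' _ _ rfl).mono_left nhdsWithin_le_nhds
    have hA : Tendsto (fun t : ℂ => fderiv ℂ f ((t, 0) : ℂ × ℂ) (1, 0)) (𝓝[≠] 0)
        (𝓝 (fderiv ℂ f ((0, 0) : ℂ × ℂ) (1, 0))) := hcont.tendsto.comp hpath
    have hB : Tendsto (fun t : ℂ => fderiv ℂ f ((t, 0) : ℂ × ℂ) (1, 0)) (𝓝[≠] (0 : ℂ)) (𝓝 0) := by
      have h3 : ∀ᶠ t in 𝓝[≠] (0 : ℂ), fderiv ℂ f ((t, 0) : ℂ × ℂ) (1, 0) = 0 := by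
        filter_upwards [inter_mem_nhdsWithin {(0 : ℂ)}ᶜ (ball_mem_nhds (0 : ℂ) hε)] with t ht
        obtain ⟨ht0, htb⟩ := ht
        rw [mem_ball, dist_zero_right] at htb
        exact hd t htb ht0
      exact Tendsto.congr' (h3.mono fun t ht => ht.symm) tendsto_const_nhds
    exact tendsto_nhds_unique hA hB
  -- the slice has zero derivative on the ball
  set s : ℂ → ℂ := fun x => f (x, 0) with hs
  have hder : ∀ x ∈ ball (0 : ℂ) ε, HasDerivAt s 0 x := by
    intro x hx
    rw [mem_ball, dist_zero_right] at hx
    have hdx : DifferentiableAt ℂ f ((x, 0) : ℂ × ℂ) :=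
      hf.differentiableAt (hDo.mem_nhds (hmem x hx))
    have h1 := sliceX hdx
    rcases ne_or_eq x 0 with h0 | h0
    · rw [hd x hx h0] at h1; exact h1
    · subst h0; rw [hd0] at h1; exact h1
  have hsd : DifferentiableOn ℂ s (ball (0 : ℂ) ε) :=
    fun x hx => (hder x hx).differentiableAt.differentiableWithinAt
  have hzero : ∀ x ∈ ball (0 : ℂ) ε, fderivWithin ℂ s (ball (0 : ℂ) ε) x = 0 := by
    intro x hx
    have h1 : HasFDerivAt s ((1 : ℂ →L[ℂ] ℂ).smulRight 0) x := (hder x hx).hasFDerivAt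
    rw [fderivWithin_of_isOpen isOpen_ball hx, h1.fderiv]
    ext z
    simp
  intro x hx
  exact (convex_ball (0 : ℂ) ε).is_const_of_fderivWithin_eq_zero hsd hzero
    (by rw [mem_ball, dist_zero_right]; exact hx) (mem_ball_self hε)

lemma prodmap_hasFDerivAt {u v : ℂ × ℂ → ℂ} {p : ℂ × ℂ}
    (hu : DifferentiableAt ℂ u p) (hv : DifferentiableAt ℂ v p) :
    HasFDerivAt (fun q : ℂ × ℂ => (q.1 * u q, q.2 * v q))
      ((p.1 • fderiv ℂ u p + u p • ContinuousLinearMap.fst ℂ ℂ ℂ).prod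
       (p.2 • fderiv ℂ v p + v p • ContinuousLinearMap.snd ℂ ℂ ℂ)) p := by
  have h1 : HasFDerivAt (fun q : ℂ × ℂ => q.1 * u q)
      (p.1 • fderiv ℂ u p + u p • ContinuousLinearMap.fst ℂ ℂ ℂ) p :=
    (hasFDerivAt_fst.mul hu.hasFDerivAt)
  have h2 : HasFDerivAt (fun q : ℂ × ℂ => q.2 * v q)
      (p.2 • fderiv ℂ v p + v p • ContinuousLinearMap.snd ℂ ℂ ℂ) p :=
    (hasFDerivAt_snd.mul hv.hasFDerivAt)
  exact h1.prodMk h2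

/-- A map `G = (x·u, y·v)`, with `u, v` holomorphic and nonvanishing on a
punctured neighborhood of `0` minus the axis `{x = 0}`, preserving
`Z₁ = n x ∂/∂x − m y ∂/∂y`, satisfies `n x u_x − m y u_y = 0` and
`n x v_x − m y v_y = 0`; consequently `u, v` extend holomorphically across
`{x = 0}` and `G` extends to a biholomorphism of a neighborhood of `0`
preserving `Z₁`. -/
theorem preserving_map_extends (n m : ℕ) (hn : 0 < n) (hm : 0 < m)
    (ε : ℝ) (hε : 0 < ε) (u v : ℂ × ℂ → ℂ)
    (Ω : Set (ℂ × ℂ))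
    (hΩ : Ω = (ball (0 : ℂ) ε ×ˢ ball (0 : ℂ) ε) \ {p : ℂ × ℂ | p.1 = 0})
    (hu : DifferentiableOn ℂ u Ω) (hv : DifferentiableOn ℂ v Ω)
    (hu0 : ∀ p ∈ Ω, u p ≠ 0) (hv0 : ∀ p ∈ Ω, v p ≠ 0)
    (G : ℂ × ℂ → ℂ × ℂ) (hG : ∀ p, G p = (p.1 * u p, p.2 * v p))
    (hinj : Set.InjOn G Ω)
    (hpres : ∀ p ∈ Ω, fderiv ℂ G p (Zlin n m p) = Zlin n m (G p)) :
    (∀ p ∈ Ω,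
      (n : ℂ) * p.1 * fderiv ℂ u p (1, 0) - (m : ℂ) * p.2 * fderiv ℂ u p (0, 1) = 0 ∧
      (n : ℂ) * p.1 * fderiv ℂ v p (1, 0) - (m : ℂ) * p.2 * fderiv ℂ v p (0, 1) = 0) ∧
    ∃ U V : ℂ × ℂ → ℂ,
      DifferentiableOn ℂ U (ball (0 : ℂ) ε ×ˢ ball (0 : ℂ) ε) ∧
      DifferentiableOn ℂ V (ball (0 : ℂ) ε ×ˢ ball (0 : ℂ) ε) ∧
      (∀ p ∈ Ω, U p = u p ∧ V p = v p) ∧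
      ∃ W : Set (ℂ × ℂ), IsOpen W ∧ (0 : ℂ × ℂ) ∈ W ∧
        W ⊆ ball (0 : ℂ) ε ×ˢ ball (0 : ℂ) ε ∧
        Set.InjOn (fun p : ℂ × ℂ => (p.1 * U p, p.2 * V p)) W ∧
        ∀ p ∈ W, fderiv ℂ (fun p : ℂ × ℂ => (p.1 * U p, p.2 * V p)) p (Zlin n m p) =
          Zlin n m (p.1 * U p, p.2 * V p) := by
  have hΩo : IsOpen Ω := omega_open hΩ
  have hDo : IsOpen (ball (0 : ℂ) ε ×ˢ ball (0 : ℂ) ε) := isOpen_ball.prod isOpen_ball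
  obtain rfl : G = fun p : ℂ × ℂ => (p.1 * u p, p.2 * v p) := funext hG
  -- Step A : the PDE on Ω
  have hAz : ∀ p ∈ Ω, p.1 * fderiv ℂ u p (Zlin n m p) = 0 ∧
      p.2 * fderiv ℂ v p (Zlin n m p) = 0 := by
    intro p hp
    have hup : DifferentiableAt ℂ u p := hu.differentiableAt (hΩo.mem_nhds hp)
    have hvp : DifferentiableAt ℂ v p := hv.differentiableAt (hΩo.mem_nhds hp)
    have hF := prodmap_hasFDerivAt hup hvp
    have hpr := hpres p hp
    rw [hF.fderiv] at hpr
    have e1 := congrArg Prod.fst hpr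
    have e2 := congrArg Prod.snd hpr
    simp only [ContinuousLinearMap.prod_apply, ContinuousLinearMap.add_apply,
      ContinuousLinearMap.smul_apply, ContinuousLinearMap.coe_fst',
      ContinuousLinearMap.coe_snd', smul_eq_mul, Zlin] at e1 e2
    simp only [Zlin]
    constructor
    · linear_combination e1
    · linear_combination e2
  have hzd : ∀ (w : ℂ × ℂ → ℂ) (p : ℂ × ℂ), fderiv ℂ w p (Zlin n m p) =
      (n : ℂ) * p.1 * fderiv ℂ w p (1, 0) + (-(m : ℂ) * p.2) * fderiv ℂ w p (0, 1) := by
    intro w p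
    exact clm_decomp (fderiv ℂ w p) ((n : ℂ) * p.1) (-(m : ℂ) * p.2)
  have hu_pde : ∀ p ∈ Ω,
      (n : ℂ) * p.1 * fderiv ℂ u p (1, 0) - (m : ℂ) * p.2 * fderiv ℂ u p (0, 1) = 0 := by
    intro p hp
    have h0 : p.1 ≠ 0 := ((omega_mem hΩ p).1 hp).2
    have h2 : fderiv ℂ u p (Zlin n m p) = 0 :=
      ((mul_eq_zero.1 ((hAz p hp).1)).resolve_left h0)
    rw [hzd u p] at h2
    linear_combination h2
  have hv_pde : ∀ p ∈ Ω,
      (n : ℂ) * p.1 * fderiv ℂ v p (1, 0) - (m : ℂ) * p.2 * fderiv ℂ v p (0, 1) = 0 := by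
    apply pde_from_dense hε hΩ hv
    intro p hp h0
    have h2 : fderiv ℂ v p (Zlin n m p) = 0 :=
      ((mul_eq_zero.1 ((hAz p hp).2)).resolve_left h0)
    rw [hzd v p] at h2
    linear_combination h2
  refine ⟨fun p hp => ⟨hu_pde p hp, hv_pde p hp⟩, ?_⟩
  -- the extensions
  obtain ⟨U, hUd, hUeq⟩ := extend_w hn hm hε hΩ hu hu_pde
  obtain ⟨V, hVd, hVeq⟩ := extend_w hn hm hε hΩ hv hv_pde
  have hopen : IsOpen {q : ℂ × ℂ | q.1 ≠ 0} :=
    isOpen_compl_iff.2 (isClosed_singleton.preimage continuous_fst)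
  have hUfe : ∀ p ∈ Ω, fderiv ℂ U p = fderiv ℂ u p := fun p hp =>
    (eventuallyEq_of_mem (hopen.mem_nhds (((omega_mem hΩ p).1 hp).2))
      (fun q hq => hUeq q hq)).fderiv_eq
  have hVfe : ∀ p ∈ Ω, fderiv ℂ V p = fderiv ℂ v p := fun p hp =>
    (eventuallyEq_of_mem (hopen.mem_nhds (((omega_mem hΩ p).1 hp).2))
      (fun q hq => hVeq q hq)).fderiv_eq
  -- PDE for the extensions on the whole bidisk
  have hUP := pde_extend (n := n) (m := m) hε hΩ hUd
    (fun p hp => by rw [hUfe p hp]; exact hu_pde p hp)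
  have hVP := pde_extend (n := n) (m := m) hε hΩ hVd
    (fun p hp => by rw [hVfe p hp]; exact hv_pde p hp)
  -- nonvanishing at the origin via axis constancy
  have hmem0 : ∀ x : ℂ, ‖x‖ < ε → ((x, 0) : ℂ × ℂ) ∈ ball (0 : ℂ) ε ×ˢ ball (0 : ℂ) ε := by
    intro x hx
    refine ⟨?_, ?_⟩
    · simpa [mem_ball, dist_zero_right] using hx
    · simpa [mem_ball] using hε
  have haxis : ∀ (Wf : ℂ × ℂ → ℂ),
      (∀ p ∈ ball (0 : ℂ) ε ×ˢ ball (0 : ℂ) ε,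
        (n : ℂ) * p.1 * fderiv ℂ Wf p (1, 0) - (m : ℂ) * p.2 * fderiv ℂ Wf p (0, 1) = 0) →
      ∀ x : ℂ, ‖x‖ < ε → x ≠ 0 → fderiv ℂ Wf ((x, 0) : ℂ × ℂ) (1, 0) = 0 := by
    intro Wf hWP x h1 h2
    have h3 := hWP (x, 0) (hmem0 x h1)
    simp only at h3
    have h4 : ((n : ℂ) * x) * fderiv ℂ Wf ((x, 0) : ℂ × ℂ) (1, 0) = 0 := by
      linear_combination h3
    have hnx : (n : ℂ) * x ≠ 0 :=
      mul_ne_zero (Nat.cast_ne_zero.2 hn.ne') h2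
    exact (mul_eq_zero.1 h4).resolve_left hnx
  have hUax := axis_const hε hUd (haxis U hUP)
  have hVax := axis_const hε hVd (haxis V hVP)
  set x₁ : ℂ := ((ε / 2 : ℝ) : ℂ) with hx₁
  have hx₁n : ‖x₁‖ = ε / 2 := by
    rw [hx₁, Complex.norm_real, Real.norm_eq_abs, abs_of_pos (by positivity)]
  have hx₁0 : x₁ ≠ 0 := by
    rw [hx₁]
    exact_mod_cast Complex.ofReal_ne_zero.2 (by positivity)
  have hx₁ε : ‖x₁‖ < ε := by rw [hx₁n]; linarith
  have hx₁Ω : ((x₁, 0) : ℂ × ℂ) ∈ Ω := (omega_mem hΩ _).2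
    ⟨⟨hx₁ε, by simpa using hε⟩, hx₁0⟩
  have hU0 : U (0, 0) ≠ 0 := by
    rw [← hUax x₁ hx₁ε, hUeq (x₁, 0) hx₁0]
    exact hu0 _ hx₁Ω
  have hV0 : V (0, 0) ≠ 0 := by
    rw [← hVax x₁ hx₁ε, hVeq (x₁, 0) hx₁0]
    exact hv0 _ hx₁Ω
  have hU0' : U 0 ≠ 0 := hU0
  have hV0' : V 0 ≠ 0 := hV0
  -- the explicit derivative of the glued map
  set fstC := ContinuousLinearMap.fst ℂ ℂ ℂ with hfstC
  set sndC := ContinuousLinearMap.snd ℂ ℂ ℂ with hsndC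
  set Φ : ℂ × ℂ → (ℂ × ℂ →L[ℂ] ℂ × ℂ) := fun p =>
    ((p.1 * fderiv ℂ U p (1, 0) + U p) • fstC + (p.1 * fderiv ℂ U p (0, 1)) • sndC).prod
    ((p.2 * fderiv ℂ V p (1, 0)) • fstC + (p.2 * fderiv ℂ V p (0, 1) + V p) • sndC) with hΦdef
  have hΦd : ∀ p ∈ ball (0 : ℂ) ε ×ˢ ball (0 : ℂ) ε,
      HasFDerivAt (fun q : ℂ × ℂ => (q.1 * U q, q.2 * V q)) (Φ p) p := by
    intro p hp
    have hUp : DifferentiableAt ℂ U p := hUd.differentiableAt (hDo.mem_nhds hp)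
    have hVp : DifferentiableAt ℂ V p := hVd.differentiableAt (hDo.mem_nhds hp)
    have h1 := prodmap_hasFDerivAt hUp hVp
    have heq : (p.1 • fderiv ℂ U p + U p • fstC).prod
        (p.2 • fderiv ℂ V p + V p • sndC) = Φ p := by
      apply ContinuousLinearMap.ext
      intro q
      have hdu := clm_decomp (fderiv ℂ U p) q.1 q.2
      have hdv := clm_decomp (fderiv ℂ V p) q.1 q.2
      simp only [hΦdef, hfstC, hsndC, ContinuousLinearMap.prod_apply,
        ContinuousLinearMap.add_apply, ContinuousLinearMap.smul_apply,
        ContinuousLinearMap.coe_fst', ContinuousLinearMap.coe_snd', smul_eq_mul,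
        Prod.mk.injEq]
      rw [show ((q.1, q.2) : ℂ × ℂ) = q from rfl] at hdu hdv
      constructor
      · linear_combination p.1 * hdu
      · linear_combination p.2 * hdv
    exact heq ▸ h1
  have h0D : (0 : ℂ × ℂ) ∈ ball (0 : ℂ) ε ×ˢ ball (0 : ℂ) ε :=
    ⟨mem_ball_self hε, mem_ball_self hε⟩
  -- continuity of Φ at 0
  have hcontΦ : ContinuousAt Φ 0 := by
    have hcU : ContinuousAt U 0 := (hUd.differentiableAt (hDo.mem_nhds h0D)).continuousAt
    have hcV : ContinuousAt V 0 := (hVd.differentiableAt (hDo.mem_nhds h0D)).continuousAt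
    have hcU1 : ContinuousAt (fun p => fderiv ℂ U p (1, 0)) 0 :=
      (continuousOn_partial_fst hDo hUd).continuousAt (hDo.mem_nhds h0D)
    have hcU2 : ContinuousAt (fun p => fderiv ℂ U p (0, 1)) 0 :=
      (continuousOn_partial_snd hDo hUd).continuousAt (hDo.mem_nhds h0D)
    have hcV1 : ContinuousAt (fun p => fderiv ℂ V p (1, 0)) 0 :=
      (continuousOn_partial_fst hDo hVd).continuousAt (hDo.mem_nhds h0D)
    have hcV2 : ContinuousAt (fun p => fderiv ℂ V p (0, 1)) 0 :=
      (continuousOn_partial_snd hDo hVd).continuousAt (hDo.mem_nhds h0D)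
    have hL1 : ContinuousAt (fun p : ℂ × ℂ =>
        (p.1 * fderiv ℂ U p (1, 0) + U p) • fstC + (p.1 * fderiv ℂ U p (0, 1)) • sndC) 0 :=
      (((continuousAt_fst.mul hcU1).add hcU).smul continuousAt_const).add
        ((continuousAt_fst.mul hcU2).smul continuousAt_const)
    have hL2 : ContinuousAt (fun p : ℂ × ℂ =>
        (p.2 * fderiv ℂ V p (1, 0)) • fstC + (p.2 * fderiv ℂ V p (0, 1) + V p) • sndC) 0 :=
      ((continuousAt_snd.mul hcV1).smul continuousAt_const).add
        (((continuousAt_snd.mul hcV2).add hcV).smul continuousAt_const)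
    have hiso := (ContinuousLinearMap.prodₗᵢ (𝕜 := ℂ) (E := ℂ × ℂ) (F := ℂ) (G := ℂ)
      ℂ).continuous
    exact (hiso.continuousAt).comp (hL1.prodMk hL2)
  have hder : ∀ᶠ q in 𝓝 (0 : ℂ × ℂ),
      HasFDerivAt (fun q : ℂ × ℂ => (q.1 * U q, q.2 * V q)) (Φ q) q :=
    eventually_of_mem (hDo.mem_nhds h0D) hΦd
  have hstrict : HasStrictFDerivAt (fun q : ℂ × ℂ => (q.1 * U q, q.2 * V q)) (Φ 0) 0 :=
    hasStrictFDerivAt_of_hasFDerivAt_of_continuousAt hder hcontΦ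
  -- the derivative at 0 as a continuous linear equivalence
  set e : (ℂ × ℂ) ≃L[ℂ] (ℂ × ℂ) :=
    (ContinuousLinearEquiv.unitsEquivAut ℂ (Units.mk0 (U 0) hU0')).prodCongr
    (ContinuousLinearEquiv.unitsEquivAut ℂ (Units.mk0 (V 0) hV0')) with he
  have heqe : Φ 0 = (e : (ℂ × ℂ) →L[ℂ] (ℂ × ℂ)) := by
    apply ContinuousLinearMap.ext
    intro q
    simp only [hΦdef, hfstC, hsndC, he, ContinuousLinearMap.prod_apply,
      ContinuousLinearMap.add_apply, ContinuousLinearMap.smul_apply,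
      ContinuousLinearMap.coe_fst', ContinuousLinearMap.coe_snd', smul_eq_mul,
      ContinuousLinearEquiv.coe_coe, ContinuousLinearEquiv.prodCongr_apply,
      ContinuousLinearEquiv.unitsEquivAut_apply, Units.val_mk0,
      Prod.fst_zero, Prod.snd_zero, zero_mul, mul_zero, add_zero, zero_add]
    exact Prod.ext (mul_comm _ _) (mul_comm _ _)
  rw [heqe] at hstrict
  set ph := hstrict.toOpenPartialHomeomorph _ with hph
  have hphcoe : (ph : ℂ × ℂ → ℂ × ℂ) = fun q : ℂ × ℂ => (q.1 * U q, q.2 * V q) :=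
    hstrict.toOpenPartialHomeomorph_coe
  refine ⟨U, V, hUd, hVd,
    fun p hp => ⟨hUeq p (((omega_mem hΩ p).1 hp).2), hVeq p (((omega_mem hΩ p).1 hp).2)⟩,
    ph.source ∩ (ball (0 : ℂ) ε ×ˢ ball (0 : ℂ) ε),
    ph.open_source.inter hDo,
    ⟨hstrict.mem_toOpenPartialHomeomorph_source, h0D⟩,
    inter_subset_right, ?_, ?_⟩
  · have h1 := ph.injOn
    rw [hphcoe] at h1
    exact h1.mono inter_subset_left
  · intro p hp
    rw [(hΦd p hp.2).fderiv]
    have h1 := hUP p hp.2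
    have h2 := hVP p hp.2
    simp only [hΦdef, hfstC, hsndC, ContinuousLinearMap.prod_apply,
      ContinuousLinearMap.add_apply, ContinuousLinearMap.smul_apply,
      ContinuousLinearMap.coe_fst', ContinuousLinearMap.coe_snd', smul_eq_mul,
      Zlin, Prod.mk.injEq]
    constructor
    · linear_combination p.1 * h1
    · linear_combination p.2 * h2
end
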